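/- arXiv:1112.0270 — 9 statements merged into one kernel-verified Lean document; each statement's English description precedes it below -/
import Mathlib

section
/- Let n ≥ 1 be an integer, let α_1 and λ be real numbers, let α_2,…,α_n and β_1,…,β_n be real numbers with β_j ≠ 0 and β_j ≠ λ for every j, and let A be the associated cascade rate matrix. Then A and I + λA⁻¹ are invertible, and the function x : ℝ → ℝ^n defined by x(t) = α_1 · (exp(tA) − e^{−λt} I) A⁻¹ (I + λA⁻¹)⁻¹ e_1 satisfies x(0) = 0 and, for every real t, x is differentiable at t with derivative A·x(t) + α_1 e^{−λt}·e_1 (i.e., x solves the linear cascade system with an exponentially decaying stimulus R(t) = α_1 e^{−λt} and resting initial conditions). -/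
open Matrix

/-- The cascade rate matrix (1-based indexing in `α`, `β`):
`A (j,j) = -β j`, `A (j+1, j) = α (j+1)`, zeros elsewhere. -/
noncomputable def cascadeMatrix (n : ℕ) (α β : ℕ → ℝ) : Matrix (Fin n) (Fin n) ℝ :=
  fun r c =>
    if r = c then -β (r.val + 1)
    else if r.val = c.val + 1 then α (r.val + 1)
    else 0

/-- The `j`-th standard basis vector of `ℝ^n` (1-based `j`). -/
def stdBasisVec (n j : ℕ) : Fin n → ℝ := fun r => if r.val + 1 = j then 1 else 0

attribute [local instance] Matrix.linftyOpNormedAddCommGroup Matrix.linftyOpNormedRing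
  Matrix.linftyOpNormedAlgebra

/-- for a cascade matrix `A` with all `β j ≠ 0` and `β j ≠ λ`, the matrices
`A` and `I + λ A⁻¹` are invertible, and
`x t = α₁ • (exp (t A) - e^{-λ t} I) A⁻¹ (I + λ A⁻¹)⁻¹ e₁` satisfies `x 0 = 0` and
`x' = A x + α₁ e^{-λ t} e₁`. -/
theorem cascade_decaying_stimulus_solution
    (n : ℕ) (hn : 1 ≤ n) (α₁ lam : ℝ) (α β : ℕ → ℝ)
    (hβ : ∀ j, 1 ≤ j → j ≤ n → β j ≠ 0)
    (hbl : ∀ j, 1 ≤ j → j ≤ n → β j ≠ lam)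
    (A : Matrix (Fin n) (Fin n) ℝ) (hA : A = cascadeMatrix n α β)
    (x : ℝ → Fin n → ℝ)
    (hx : ∀ t : ℝ,
      x t = α₁ • (((NormedSpace.exp (t • A) - Real.exp (-lam * t) • (1 : Matrix (Fin n) (Fin n) ℝ))
        * A⁻¹ * (1 + lam • A⁻¹)⁻¹) *ᵥ stdBasisVec n 1)) :
    IsUnit A ∧ IsUnit (1 + lam • A⁻¹) ∧ x 0 = 0 ∧
      ∀ t : ℝ, HasDerivAt x (A *ᵥ x t + (α₁ * Real.exp (-lam * t)) • stdBasisVec n 1) t := by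
  -- triangularity
  have htri : A.BlockTriangular OrderDual.toDual := by
    intro i j h
    simp only [OrderDual.toDual_lt_toDual] at h
    have h1 : i ≠ j := by intro e; subst e; exact absurd h (lt_irrefl _)
    have h2 : ¬ (i.val = j.val + 1) := by omega
    simp [hA, cascadeMatrix, h1, h2]
  have htri2 : (A + lam • (1 : Matrix (Fin n) (Fin n) ℝ)).BlockTriangular OrderDual.toDual := by
    intro i j h
    have h0 := htri h
    simp only [OrderDual.toDual_lt_toDual] at h
    have h1 : i ≠ j := by intro e; subst e; exact absurd h (lt_irrefl _)
    simp [h0, Matrix.one_apply, h1]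
  have hdiag : ∀ i : Fin n, A i i = -β (i.val + 1) := by
    intro i; simp [hA, cascadeMatrix]
  have hdetA : A.det ≠ 0 := by
    rw [Matrix.det_of_lowerTriangular _ htri]
    refine Finset.prod_ne_zero_iff.2 fun i _ => ?_
    rw [hdiag i]
    exact neg_ne_zero.2 (hβ _ (by omega) (by omega : i.val + 1 ≤ n))
  have hUA : IsUnit A := (Matrix.isUnit_iff_isUnit_det A).2 (isUnit_iff_ne_zero.2 hdetA)
  have hdetC : (A + lam • (1 : Matrix (Fin n) (Fin n) ℝ)).det ≠ 0 := by
    rw [Matrix.det_of_lowerTriangular _ htri2]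
    refine Finset.prod_ne_zero_iff.2 fun i _ => ?_
    have he : (A + lam • (1 : Matrix (Fin n) (Fin n) ℝ)) i i = -β (i.val + 1) + lam := by
      simp [hdiag i, Matrix.one_apply]
    rw [he]
    have hne := hbl _ (by omega : 1 ≤ i.val + 1) (by omega : i.val + 1 ≤ n)
    intro hc; apply hne; linarith
  have hAAinv : A * A⁻¹ = 1 := Matrix.mul_nonsing_inv A (isUnit_iff_ne_zero.2 hdetA)
  have hkey : (A + lam • (1 : Matrix (Fin n) (Fin n) ℝ)) * A⁻¹ = 1 + lam • A⁻¹ := by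
    rw [Matrix.add_mul, hAAinv, Matrix.smul_mul, Matrix.one_mul]
  have hUC : IsUnit (A + lam • (1 : Matrix (Fin n) (Fin n) ℝ)) :=
    (Matrix.isUnit_iff_isUnit_det _).2 (isUnit_iff_ne_zero.2 hdetC)
  have hUAinv : IsUnit (A⁻¹ : Matrix (Fin n) (Fin n) ℝ) := Matrix.isUnit_nonsing_inv_iff.2 hUA
  have hUD : IsUnit (1 + lam • A⁻¹ : Matrix (Fin n) (Fin n) ℝ) := hkey ▸ hUC.mul hUAinv
  have hdetD : (1 + lam • A⁻¹ : Matrix (Fin n) (Fin n) ℝ).det ≠ 0 :=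
    isUnit_iff_ne_zero.1 ((Matrix.isUnit_iff_isUnit_det _).1 hUD)
  -- abbreviations
  set e : Fin n → ℝ := stdBasisVec n 1 with he
  set B : Matrix (Fin n) (Fin n) ℝ := A⁻¹ * (1 + lam • A⁻¹)⁻¹ with hB
  have hABkey : (A + lam • (1 : Matrix (Fin n) (Fin n) ℝ)) * B = 1 := by
    rw [hB, ← Matrix.mul_assoc, hkey, Matrix.mul_nonsing_inv _ (isUnit_iff_ne_zero.2 hdetD)]
  clear_value B
  -- x 0 = 0
  have hx0 : x 0 = 0 := by
    rw [hx 0]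
    simp [NormedSpace.exp_zero, Matrix.zero_mul]
  refine ⟨hUA, hUD, hx0, fun t => ?_⟩
  -- derivative
  set c : ℝ → ℝ := fun u => Real.exp (-lam * u) with hc
  set E : ℝ → Matrix (Fin n) (Fin n) ℝ := fun u => NormedSpace.exp (u • A) with hE
  have hcderiv : HasDerivAt c (-lam * c t) t := by
    have h1 : HasDerivAt (fun u : ℝ => -lam * u) (-lam) t := by
      simpa using (hasDerivAt_id t).const_mul (-lam)
    have := (Real.hasDerivAt_exp (-lam * t)).comp t h1
    simpa [hc, Function.comp_def, mul_comm] using this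
  have hEderiv : HasDerivAt E (A * E t) t := hasDerivAt_exp_smul_const' A t
  have hMderiv : HasDerivAt (fun u => α₁ • ((E u - c u • (1 : Matrix (Fin n) (Fin n) ℝ)) * B))
      (α₁ • ((A * E t - (-lam * c t) • (1 : Matrix (Fin n) (Fin n) ℝ)) * B)) t :=
    ((hEderiv.sub (hcderiv.smul_const _)).mul_const B).const_smul α₁
  -- the continuous linear map "apply to e"
  let φ : Matrix (Fin n) (Fin n) ℝ →L[ℝ] (Fin n → ℝ) :=
    LinearMap.toContinuousLinearMap
      { toFun := fun M => M *ᵥ e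
        map_add' := fun M N => Matrix.add_mulVec M N e
        map_smul' := fun r M => Matrix.smul_mulVec r M e }
  have hxfun : x = fun u => φ (α₁ • ((E u - c u • (1 : Matrix (Fin n) (Fin n) ℝ)) * B)) := by
    funext u
    rw [hx u]
    simp [φ, Matrix.smul_mulVec, Matrix.mul_assoc, hB, hE, hc]
  have hxderiv : HasDerivAt x
      (φ (α₁ • ((A * E t - (-lam * c t) • (1 : Matrix (Fin n) (Fin n) ℝ)) * B))) t := by
    rw [hxfun]
    exact φ.hasFDerivAt.comp_hasDerivAt t hMderiv
  -- identify the derivative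
  have hmat : (A * E t - (-lam * c t) • (1 : Matrix (Fin n) (Fin n) ℝ)) * B
      = A * ((E t - c t • (1 : Matrix (Fin n) (Fin n) ℝ)) * B) + c t • (1 : Matrix (Fin n) (Fin n) ℝ) := by
    have expand1 : (A * E t - (-lam * c t) • (1 : Matrix (Fin n) (Fin n) ℝ)) * B
        = A * E t * B + (lam * c t) • B := by
      rw [Matrix.sub_mul, Matrix.smul_mul, Matrix.one_mul, neg_mul, neg_smul, sub_neg_eq_add]
    have h3 : c t • (1 : Matrix (Fin n) (Fin n) ℝ)
        = c t • (A * B) + (lam * c t) • B := by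
      rw [← hABkey, Matrix.add_mul, smul_add, Matrix.smul_mul, smul_smul, mul_comm (c t) lam, Matrix.one_mul]
    rw [expand1, Matrix.sub_mul, Matrix.smul_mul, Matrix.one_mul, Matrix.mul_sub,
      Matrix.mul_smul, h3]
    simp only [Matrix.mul_assoc]
    abel
  have hxt : x t = α₁ • (((E t - c t • (1 : Matrix (Fin n) (Fin n) ℝ)) * B) *ᵥ e) := by
    rw [hx t, hB, Matrix.mul_assoc]
  have hfinal : φ (α₁ • ((A * E t - (-lam * c t) • (1 : Matrix (Fin n) (Fin n) ℝ)) * B))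
      = A *ᵥ x t + (α₁ * Real.exp (-lam * t)) • e := by
    rw [hmat, hxt]
    show (α₁ • (A * ((E t - c t • (1 : Matrix (Fin n) (Fin n) ℝ)) * B)
        + c t • (1 : Matrix (Fin n) (Fin n) ℝ))) *ᵥ e = _
    rw [Matrix.smul_mulVec, Matrix.add_mulVec, Matrix.smul_mulVec,
      Matrix.one_mulVec, Matrix.mulVec_smul, ← Matrix.mulVec_mulVec, smul_add, smul_smul]
  rw [← hfinal]
  exact hxderiv
end

section
/- Let n ≥ 1 be an integer, let α_1,…,α_n be real numbers and β a real number with β ≠ 0. Suppose x_1,…,x_n : ℝ → ℝ satisfy x_k(0) = 0 for all k and, for every real t, x_1 is differentiable at t with derivative α_1 − β x_1(t) and, for each 2 ≤ k ≤ n, x_k is differentiable at t with derivative α_k x_{k−1}(t) − β x_k(t). Then for every real t, x_n(t) = ((∏_{j=1}^n α_j) / β^n) · P(n, βt), where P is the normalised lower incomplete gamma function. -/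
/-- The normalised lower incomplete gamma function `P(n, x)` for integer `n ≥ 1`:
`P(n, x) = (1/(n-1)!) ∫_0^x e^{-s} s^{n-1} ds`. -/
noncomputable def normIncGamma (n : ℕ) (x : ℝ) : ℝ :=
  (∫ s in (0:ℝ)..x, Real.exp (-s) * s ^ (n - 1)) / (Nat.factorial (n - 1))

lemma contAux (m : ℕ) : Continuous (fun s : ℝ => Real.exp (-s) * s ^ m) := by
  continuity

lemma normIncGamma_hasDerivAt (k : ℕ) (x : ℝ) :
    HasDerivAt (normIncGamma k)
      (Real.exp (-x) * x ^ (k - 1) / (Nat.factorial (k - 1))) x := by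
  have hc := contAux (k - 1)
  have h := intervalIntegral.integral_hasDerivAt_right
    (hc.intervalIntegrable 0 x)
    hc.aestronglyMeasurable.stronglyMeasurableAtFilter hc.continuousAt
  exact h.div_const _

lemma normIncGamma_zero (k : ℕ) : normIncGamma k 0 = 0 := by
  simp [normIncGamma]

lemma normIncGamma_one (y : ℝ) : normIncGamma 1 y = 1 - Real.exp (-y) := by
  have hd : ∀ s ∈ Set.uIcc (0:ℝ) y,
      HasDerivAt (fun u : ℝ => -Real.exp (-u)) (Real.exp (-s) * s ^ 0) s := by
    intro s _
    have h1 : HasDerivAt (fun u : ℝ => Real.exp (-u)) (-Real.exp (-s)) s := by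
      simpa [Function.comp_def] using (Real.hasDerivAt_exp (-s)).comp s ((hasDerivAt_id s).neg)
    simpa using h1.fun_neg
  have := intervalIntegral.integral_eq_sub_of_hasDerivAt hd
    ((contAux 0).intervalIntegrable 0 y)
  simp [normIncGamma, this]

lemma normIncGamma_succ (k : ℕ) (hk : 1 ≤ k) (x : ℝ) :
    normIncGamma k x = normIncGamma (k + 1) x +
      Real.exp (-x) * x ^ k / (Nat.factorial k) := by
  have hd : ∀ s ∈ Set.uIcc (0:ℝ) x,
      HasDerivAt (fun u : ℝ => -(Real.exp (-u) * u ^ k))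
        (Real.exp (-s) * s ^ k - (k : ℝ) * (Real.exp (-s) * s ^ (k - 1))) s := by
    intro s _
    have he : HasDerivAt (fun u : ℝ => Real.exp (-u)) (-Real.exp (-s)) s := by
      simpa [Function.comp_def] using (Real.hasDerivAt_exp (-s)).comp s ((hasDerivAt_id s).neg)
    have hp : HasDerivAt (fun u : ℝ => u ^ k) ((k : ℝ) * s ^ (k - 1)) s := by
      simpa using hasDerivAt_pow k s
    have := (he.fun_mul hp).fun_neg
    refine this.congr_deriv (Eq.symm ?_)
    ring
  have hint : IntervalIntegrable
      (fun s : ℝ => Real.exp (-s) * s ^ k - (k : ℝ) * (Real.exp (-s) * s ^ (k - 1)))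
      MeasureTheory.volume 0 x :=
    ((contAux k).sub (continuous_const.mul (contAux (k-1)))).intervalIntegrable 0 x
  have hFTC := intervalIntegral.integral_eq_sub_of_hasDerivAt hd hint
  have hsplit : (∫ s in (0:ℝ)..x, (Real.exp (-s) * s ^ k -
        (k : ℝ) * (Real.exp (-s) * s ^ (k - 1))))
      = (∫ s in (0:ℝ)..x, Real.exp (-s) * s ^ k) -
        (k : ℝ) * ∫ s in (0:ℝ)..x, Real.exp (-s) * s ^ (k - 1) := by
    rw [intervalIntegral.integral_sub ((contAux k).intervalIntegrable 0 x)
      (show IntervalIntegrable (fun s : ℝ => (k : ℝ) * (Real.exp (-s) * s ^ (k - 1)))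
          MeasureTheory.volume 0 x from
        (continuous_const.mul (contAux (k-1))).intervalIntegrable 0 x),
      intervalIntegral.integral_const_mul]
  have h0k : (0:ℝ) ^ k = 0 := zero_pow (by omega)
  rw [hsplit, h0k] at hFTC
  simp only [mul_zero, neg_zero, sub_zero] at hFTC
  have key : (∫ s in (0:ℝ)..x, Real.exp (-s) * s ^ k)
      = (k : ℝ) * (∫ s in (0:ℝ)..x, Real.exp (-s) * s ^ (k - 1))
        - Real.exp (-x) * x ^ k := by linarith
  have hkfac : (Nat.factorial k : ℝ) = (k : ℝ) * (Nat.factorial (k - 1)) := by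
    obtain ⟨m, rfl⟩ : ∃ m, k = m + 1 := ⟨k - 1, by omega⟩
    push_cast [Nat.factorial_succ]
    ring
  have hfk1 : (Nat.factorial (k-1) : ℝ) ≠ 0 := by positivity
  have hkne : (k : ℝ) ≠ 0 := by positivity
  unfold normIncGamma
  simp only [Nat.add_sub_cancel]
  rw [key, hkfac]
  field_simp
  ring

lemma ode_zero (β : ℝ) (h : ℝ → ℝ) (h0 : h 0 = 0)
    (hd : ∀ t, HasDerivAt h (-(β * h t)) t) : ∀ t, h t = 0 := by
  intro t
  have key : ∀ u : ℝ, HasDerivAt (fun s => Real.exp (β * s) * h s) 0 u := by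
    intro u
    have h1 : HasDerivAt (fun s : ℝ => Real.exp (β * s)) (β * Real.exp (β * u)) u := by
      have := (Real.hasDerivAt_exp (β * u)).comp u ((hasDerivAt_id u).const_mul β)
      simpa [mul_comm, Function.comp_def] using this
    have := h1.fun_mul (hd u)
    refine this.congr_deriv (Eq.symm ?_)
    ring
  have hconst := is_const_of_deriv_eq_zero
    (f := fun s => Real.exp (β * s) * h s)
    (fun u => (key u).differentiableAt) (fun u => (key u).deriv) t 0
  have : Real.exp (β * t) * h t = 0 := by simpa [h0] using hconst
  have hne : Real.exp (β * t) ≠ 0 := (Real.exp_pos _).ne'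
  exact (mul_eq_zero.mp this).resolve_left hne

/-- output of a weakly activated linear cascade of length `n` with constant
stimulus `α 1`, identical inactivation rates `β ≠ 0`, and resting initial conditions:
`x n t = ((∏ αⱼ)/βⁿ) P(n, β t)`. -/
theorem cascade_output_constant_stimulus
    (n : ℕ) (hn : 1 ≤ n) (α : ℕ → ℝ) (β : ℝ) (hβ : β ≠ 0)
    (x : ℕ → ℝ → ℝ)
    (h0 : ∀ k, 1 ≤ k → k ≤ n → x k 0 = 0)
    (h1 : ∀ t : ℝ, HasDerivAt (x 1) (α 1 - β * x 1 t) t)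
    (hk : ∀ k, 2 ≤ k → k ≤ n → ∀ t : ℝ,
      HasDerivAt (x k) (α k * x (k - 1) t - β * x k t) t) :
    ∀ t : ℝ, x n t = ((∏ j ∈ Finset.Icc 1 n, α j) / β ^ n) * normIncGamma n (β * t) := by
  set C : ℕ → ℝ := fun k => (∏ j ∈ Finset.Icc 1 k, α j) / β ^ k with hC
  have hgderiv : ∀ (k : ℕ) (t : ℝ), HasDerivAt (fun s => C k * normIncGamma k (β * s))
      (C k * β * (Real.exp (-(β * t)) * (β * t) ^ (k - 1) / (Nat.factorial (k - 1)))) t := by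
    intro k t
    have hlin : HasDerivAt (fun s : ℝ => β * s) β t := by
      simpa using (hasDerivAt_id t).const_mul β
    have h2 := ((normIncGamma_hasDerivAt k (β * t)).comp t hlin).const_mul (C k)
    refine h2.congr_deriv (Eq.symm ?_)
    ring
  have claim : ∀ k, 1 ≤ k → k ≤ n → ∀ t, x k t = C k * normIncGamma k (β * t) := by
    intro k hk1
    induction k, hk1 using Nat.le_induction with
    | base =>
      intro hkn t
      have hzero := ode_zero β (fun t => x 1 t - C 1 * normIncGamma 1 (β * t))
        (by simp [h0 1 le_rfl hkn, normIncGamma_zero])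
        (by
          intro u
          have hd := (h1 u).sub (hgderiv 1 u)
          refine hd.congr_deriv (Eq.symm ?_)
          have hC1 : C 1 = α 1 / β := by simp [hC]
          simp only [normIncGamma_one, hC1, Nat.sub_self, pow_zero, Nat.factorial_zero]
          field_simp
          ring)
      have ht : x 1 t - C 1 * normIncGamma 1 (β * t) = 0 := hzero t
      linarith
    | succ k hk1 IH =>
      intro hkn t
      have hkn' : k ≤ n := by omega
      have IH' := IH hkn'
      have hzero := ode_zero β (fun t => x (k+1) t - C (k+1) * normIncGamma (k+1) (β * t))
        (by simp [h0 (k+1) (by omega) hkn, normIncGamma_zero])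
        (by
          intro u
          have hdx := hk (k+1) (by omega) hkn u
          simp only [Nat.add_sub_cancel] at hdx
          have hd := hdx.sub (hgderiv (k+1) u)
          refine hd.congr_deriv (Eq.symm ?_)
          have hCsucc : α (k+1) * C k = β * C (k+1) := by
            simp only [hC]
            rw [Finset.prod_Icc_succ_top (by omega : 1 ≤ k + 1)]
            field_simp
            ring
          rw [IH' u, normIncGamma_succ k hk1 (β * u)]
          simp only [Nat.add_sub_cancel]
          linear_combination (-(normIncGamma (k+1) (β*u)
            + Real.exp (-(β*u)) * (β*u) ^ k / (Nat.factorial k))) * hCsucc)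
      have ht : x (k+1) t - C (k+1) * normIncGamma (k+1) (β * t) = 0 := hzero t
      linarith
  intro t
  exact claim n hn le_rfl t
end

section
/- Let n ≥ 1 be an integer, let α_1,…,α_n and β be real numbers. Suppose x_1,…,x_n : ℝ → ℝ satisfy x_k(0) = 0 for all k and, for every real t, x_1 is differentiable at t with derivative α_1 e^{−βt} − β x_1(t) and, for each 2 ≤ k ≤ n, x_k is differentiable at t with derivative α_k x_{k−1}(t) − β x_k(t). Then for every real t, x_n(t) = (∏_{j=1}^n α_j) · t^n · e^{−βt} / n! (the case where the decay rate λ of the stimulus equals the common inactivation rate β). -/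
/-- If `f' = -β f` everywhere and `f 0 = 0`, then `f ≡ 0`. -/
lemma cascade_aux_zero (β : ℝ) (f : ℝ → ℝ)
    (hf : ∀ t, HasDerivAt f (-β * f t) t) (h0 : f 0 = 0) : ∀ t, f t = 0 := by
  have hg : ∀ t, HasDerivAt (fun t => f t * Real.exp (β * t)) 0 t := by
    intro t
    have he : HasDerivAt (fun t : ℝ => Real.exp (β * t)) (β * Real.exp (β * t)) t := by
      simpa [mul_comm] using ((hasDerivAt_id t).const_mul β).exp
    have := (hf t).mul he
    refine this.congr_deriv ?_
    ring
  have hconst : ∀ t, f t * Real.exp (β * t) = f 0 * Real.exp (β * 0) := by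
    intro t
    exact is_const_of_deriv_eq_zero (fun u => (hg u).differentiableAt)
      (fun u => (hg u).deriv) t 0
  intro t
  have h := hconst t
  rw [h0, zero_mul] at h
  exact (mul_eq_zero.mp h).resolve_right (Real.exp_ne_zero _)

lemma cascade_target_deriv (c β : ℝ) (k : ℕ) (t : ℝ) :
    HasDerivAt (fun t : ℝ => c * t ^ (k+1) * Real.exp (-β * t))
      (c * ((k+1) * t ^ k) * Real.exp (-β * t)
        - β * (c * t ^ (k+1) * Real.exp (-β * t))) t := by
  have hp : HasDerivAt (fun t : ℝ => c * t ^ (k+1)) (c * ((k+1) * t ^ k)) t := by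
    simpa using ((hasDerivAt_pow (k+1) t).const_mul c)
  have he : HasDerivAt (fun t : ℝ => Real.exp (-β * t)) (-β * Real.exp (-β * t)) t := by
    simpa [mul_comm] using ((hasDerivAt_id t).const_mul (-β)).exp
  have := hp.mul he
  refine this.congr_deriv ?_
  ring

/-- output of a weakly activated linear cascade of length `n` with exponentially
decaying stimulus `α 1 * e^{-β t}` (the degenerate case `λ = β`), identical inactivation
rates `β`, and resting initial conditions: `x n t = (∏ αⱼ) tⁿ e^{-β t} / n!`. -/
theorem cascade_output_decaying_stimulus_degenerate
    (n : ℕ) (hn : 1 ≤ n) (α : ℕ → ℝ) (β : ℝ)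
    (x : ℕ → ℝ → ℝ)
    (h0 : ∀ k, 1 ≤ k → k ≤ n → x k 0 = 0)
    (h1 : ∀ t : ℝ, HasDerivAt (x 1) (α 1 * Real.exp (-β * t) - β * x 1 t) t)
    (hk : ∀ k, 2 ≤ k → k ≤ n → ∀ t : ℝ,
      HasDerivAt (x k) (α k * x (k - 1) t - β * x k t) t) :
    ∀ t : ℝ, x n t = (∏ j ∈ Finset.Icc 1 n, α j) * t ^ n * Real.exp (-β * t)
      / (Nat.factorial n : ℝ) := by
  suffices H : ∀ k, 1 ≤ k → k ≤ n → ∀ t : ℝ,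
      x k t = (∏ j ∈ Finset.Icc 1 k, α j) * t ^ k * Real.exp (-β * t)
        / (Nat.factorial k : ℝ) from H n hn le_rfl
  intro k hk1
  induction k, hk1 using Nat.le_induction with
  | base =>
    intro hle t
    -- base case k = 1
    set c : ℝ := α 1
    have hfact : ((Nat.factorial 1 : ℕ) : ℝ) = 1 := by norm_num [Nat.factorial]
    have hprod : (∏ j ∈ Finset.Icc 1 1, α j) = α 1 := by simp
    have hf : ∀ s, HasDerivAt (fun s => x 1 s - c * s ^ 1 * Real.exp (-β * s))
        (-β * (x 1 s - c * s ^ 1 * Real.exp (-β * s))) s := by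
      intro s
      have ht := cascade_target_deriv c β 0 s
      have := (h1 s).sub ht
      refine this.congr_deriv ?_
      push_cast
      ring
    have hz := cascade_aux_zero β _ hf (by simp [h0 1 le_rfl hle])
    have := hz t
    have : x 1 t = c * t ^ 1 * Real.exp (-β * t) := by linarith [hz t]
    rw [hprod, hfact]
    simpa using this
  | succ k hk1 ih =>
    intro hle t
    have hkn : k ≤ n := le_trans (Nat.le_succ k) hle
    have ihk := ih hkn
    set c : ℝ := (∏ j ∈ Finset.Icc 1 (k+1), α j) / (Nat.factorial (k+1) : ℝ) with hc
    have hfk : ((Nat.factorial k : ℕ) : ℝ) ≠ 0 := Nat.cast_ne_zero.mpr (Nat.factorial_ne_zero k)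
    have hfk1 : ((Nat.factorial (k+1) : ℕ) : ℝ) ≠ 0 := Nat.cast_ne_zero.mpr (Nat.factorial_ne_zero (k+1))
    have hprodsucc : (∏ j ∈ Finset.Icc 1 (k+1), α j) = (∏ j ∈ Finset.Icc 1 k, α j) * α (k+1) := by
      rw [← Finset.prod_Icc_succ_top (by omega : 1 ≤ k + 1)]
    have hf : ∀ s, HasDerivAt (fun s => x (k+1) s - c * s ^ (k+1) * Real.exp (-β * s))
        (-β * (x (k+1) s - c * s ^ (k+1) * Real.exp (-β * s))) s := by
      intro s
      have ht := cascade_target_deriv c β k s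
      have hx := hk (k+1) (by omega) hle s
      simp only [Nat.add_sub_cancel] at hx
      have := hx.sub ht
      refine this.congr_deriv ?_
      rw [ihk s]
      have key : α (k+1) * ((∏ j ∈ Finset.Icc 1 k, α j) * s ^ k * Real.exp (-β * s)
            / (Nat.factorial k : ℝ)) = c * ((k+1 : ℕ) * s ^ k) * Real.exp (-β * s) := by
        rw [hc, hprodsucc]
        rw [Nat.factorial_succ]
        push_cast
        field_simp
      push_cast at key ⊢
      linarith [key]
    have hz := cascade_aux_zero β _ hf (by simp [h0 (k+1) (by omega) hle])
    have := hz t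
    have hx : x (k+1) t = c * t ^ (k+1) * Real.exp (-β * t) := by linarith
    rw [hx, hc]
    ring
end

section
/- Let n ≥ 1 be an integer, let α_1, α_2,…,α_n, β, ε be real numbers with β ≠ 0 and β + ε ≠ 0, and for an index 1 ≤ i ≤ n let H_i be the ε-perturbed cascade rate matrix. Then each H_i is invertible, and for any two indices 1 ≤ i < h ≤ n, the solutions of the constant-stimulus cascades with perturbation at position i and at position h agree on all components at or below position h: for every index j with h ≤ j ≤ n (and also for every j with 1 ≤ j < i) and every real t, the j-th component of α_1 H_i⁻¹ (exp(tH_i) − I) e_1 equals the j-th component of α_1 H_h⁻¹ (exp(tH_h) − I) e_1. In particular, the final output x_n of the cascade is independent of the position of the perturbed inactivation rate. -/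
open Matrix

/-- The ε-perturbed cascade rate matrix `H_i` (1-based index `i` of the perturbed component):
`H_i (j,j) = -β` for `j ≠ i`, `H_i (i,i) = -(β+ε)`, `H_i (j+1, j) = α (j+1)`, zeros elsewhere. -/
noncomputable def perturbedCascadeMatrix (n : ℕ) (α : ℕ → ℝ) (β ε : ℝ) (i : ℕ) :
    Matrix (Fin n) (Fin n) ℝ :=
  fun r c =>
    if r = c then (if r.val + 1 = i then -(β + ε) else -β)
    else if r.val = c.val + 1 then α (r.val + 1)
    else 0

section Aux
open Finset

def ccomp (j m : ℕ) : ℕ := (m + j - 1).choose m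

noncomputable def fBe (b : ℝ) (k j : ℕ) : ℝ := (k.choose j : ℝ) * b ^ (k - j)

noncomputable def fAb (a b : ℝ) (k j : ℕ) : ℝ :=
  if j ≤ k then ∑ x ∈ Finset.HasAntidiagonal.antidiagonal (k - j), (ccomp j x.2 : ℝ) * a ^ x.1 * b ^ x.2
  else 0

lemma ccomp_zero_right (j : ℕ) : ccomp j 0 = 1 := by simp [ccomp]

lemma ccomp_zero_left (m : ℕ) (hm : 0 < m) : ccomp 0 m = 0 := by
  simp only [ccomp]
  exact Nat.choose_eq_zero_of_lt (by omega)

lemma ccomp_pascal (j m : ℕ) (hj : 1 ≤ j) (hm : 1 ≤ m) :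
    ccomp j m = ccomp j (m - 1) + ccomp (j - 1) m := by
  obtain ⟨j', rfl⟩ : ∃ j', j = j' + 1 := ⟨j - 1, by omega⟩
  obtain ⟨m', rfl⟩ : ∃ m', m = m' + 1 := ⟨m - 1, by omega⟩
  simp only [ccomp, Nat.add_sub_cancel]
  have h1 : m' + 1 + (j' + 1) - 1 = (m' + (j' + 1) - 1) + 1 := by omega
  have h2 : m' + (j' + 1) - 1 = m' + j' := by omega
  have h3 : m' + 1 + j' - 1 = m' + j' := by omega
  rw [h1, h2, h3, Nat.choose_succ_succ']

lemma fBe_zero_right (b : ℝ) (k : ℕ) : fBe b k 0 = b ^ k := by simp [fBe]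

lemma fAb_zero_right (a b : ℝ) (k : ℕ) : fAb a b k 0 = a ^ k := by
  induction k with
  | zero => simp [fAb, ccomp]
  | succ k ih =>
    rw [fAb, if_pos (Nat.zero_le _)] at ih ⊢
    simp only [Nat.sub_zero] at ih ⊢
    rw [Finset.Nat.sum_antidiagonal_succ']
    have : ∀ p ∈ Finset.HasAntidiagonal.antidiagonal k, (ccomp 0 (p.2 + 1) : ℝ) * a ^ p.1 * b ^ (p.2 + 1) = 0 := by
      intro p _
      rw [ccomp_zero_left _ (by omega)]
      simp
    rw [Finset.sum_congr rfl this]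
    simp [ccomp_zero_right, pow_succ, mul_comm]

lemma fBe_zero_left (b : ℝ) (j : ℕ) (hj : 1 ≤ j) : fBe b 0 j = 0 := by
  simp [fBe, Nat.choose_eq_zero_of_lt (by omega : (0:ℕ) < j)]

lemma fAb_zero_left (a b : ℝ) (j : ℕ) (hj : 1 ≤ j) : fAb a b 0 j = 0 := by
  rw [fAb, if_neg (by omega)]

lemma fBe_succ (b : ℝ) (k j : ℕ) (hj : 1 ≤ j) :
    fBe b (k+1) j = b * fBe b k j + fBe b k (j-1) := by
  obtain ⟨j', rfl⟩ : ∃ j', j = j' + 1 := ⟨j-1, by omega⟩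
  simp only [fBe, Nat.add_sub_cancel]
  rcases lt_trichotomy k j' with h | rfl | h
  · rw [Nat.choose_eq_zero_of_lt (by omega), Nat.choose_eq_zero_of_lt (by omega),
        Nat.choose_eq_zero_of_lt (by omega)]
    simp
  · rw [Nat.choose_self, Nat.choose_eq_zero_of_lt (by omega), Nat.choose_self]
    simp
  · have e1 : k + 1 - (j' + 1) = (k - (j' + 1)) + 1 := by omega
    have e2 : k - j' = (k - (j' + 1)) + 1 := by omega
    rw [e1, e2, Nat.choose_succ_succ k j']
    push_cast
    ring

lemma fAb_succ_a (a b : ℝ) (k j : ℕ) (hj : 1 ≤ j) :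
    fAb a b (k+1) j = a * fAb a b k j + fBe b k (j-1) := by
  rcases Nat.lt_or_ge k j with h | h
  · rcases Nat.lt_or_ge (k+1) j with h2 | h2
    · rw [fAb, if_neg (by omega), fAb, if_neg (by omega), fBe,
         Nat.choose_eq_zero_of_lt (by omega)]
      simp
    · have hkj : k + 1 = j := by omega
      rw [fAb, if_pos (by omega), fAb, if_neg (by omega), fBe]
      have ej : k + 1 - j = 0 := by omega
      have ej2 : j - 1 = k := by omega
      rw [ej, ej2, Nat.choose_self]
      simp [ccomp_zero_right]
  · rw [fAb, if_pos (by omega), fAb, if_pos h, fBe]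
    have e1 : k + 1 - j = (k - j) + 1 := by omega
    have e5 : k - (j - 1) = k - j + 1 := by omega
    rw [e1, e5, Finset.Nat.sum_antidiagonal_succ]
    have e2 : (ccomp j (k - j + 1) : ℝ) = (k.choose (j-1) : ℝ) := by
      congr 1
      unfold ccomp
      have e3 : k - j + 1 + j - 1 = k := by omega
      rw [e3]
      have e4 : k - j + 1 = k - (j - 1) := by omega
      rw [e4, Nat.choose_symm (by omega)]
    have e6 : ∑ p ∈ Finset.HasAntidiagonal.antidiagonal (k - j), (ccomp j p.2 : ℝ) * a ^ (p.1 + 1) * b ^ p.2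
         = a * ∑ p ∈ Finset.HasAntidiagonal.antidiagonal (k - j), (ccomp j p.2 : ℝ) * a ^ p.1 * b ^ p.2 := by
      rw [Finset.mul_sum]
      refine Finset.sum_congr rfl fun p _ => ?_
      ring
    rw [e6, e2]
    ring

lemma fAb_succ_b (a b : ℝ) (k j : ℕ) (hj : 1 ≤ j) :
    fAb a b (k+1) j = b * fAb a b k j + fAb a b k (j-1) := by
  rcases Nat.lt_or_ge k j with h | h
  · rcases Nat.lt_or_ge (k+1) j with h2 | h2
    · rw [fAb, if_neg (by omega), fAb, if_neg (by omega), fAb, if_neg (by omega)]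
      simp
    · have hkj : k + 1 = j := by omega
      rw [fAb, if_pos (by omega), fAb, if_neg (by omega), fAb, if_pos (by omega)]
      have ej : k + 1 - j = 0 := by omega
      have ej2 : k - (j - 1) = 0 := by omega
      rw [ej, ej2]
      simp [ccomp_zero_right]
  · rw [fAb, if_pos (by omega), fAb, if_pos h, fAb, if_pos (by omega)]
    have e1 : k + 1 - j = (k - j) + 1 := by omega
    have e2 : k - (j - 1) = (k - j) + 1 := by omega
    rw [e1, e2, Finset.Nat.sum_antidiagonal_succ', Finset.Nat.sum_antidiagonal_succ']
    have e3 : ∀ p ∈ Finset.HasAntidiagonal.antidiagonal (k - j),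
        (ccomp j (p.2+1) : ℝ) * a ^ p.1 * b ^ (p.2+1)
        = b * ((ccomp j p.2 : ℝ) * a ^ p.1 * b ^ p.2)
          + (ccomp (j-1) (p.2+1) : ℝ) * a ^ p.1 * b ^ (p.2+1) := by
      intro p _
      have := ccomp_pascal j (p.2+1) hj (by omega)
      simp only [Nat.add_sub_cancel] at this
      rw [this]
      push_cast
      ring
    rw [Finset.sum_congr rfl e3, Finset.sum_add_distrib, Finset.mul_sum, ccomp_zero_right,
        ccomp_zero_right]
    ring

lemma pcm_mul_apply (n : ℕ) (α : ℕ → ℝ) (β ε : ℝ) (i : ℕ) (X : Matrix (Fin n) (Fin n) ℝ)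
    (j c : Fin n) :
    (perturbedCascadeMatrix n α β ε i * X) j c =
      (if j.val + 1 = i then -(β+ε) else -β) * X j c +
      (if hj : 0 < j.val then
        α (j.val + 1) * X ⟨j.val - 1, by have := j.isLt; omega⟩ c else 0) := by
  rw [Matrix.mul_apply]
  have hsplit : ∀ c' : Fin n, perturbedCascadeMatrix n α β ε i j c' * X c' c =
      (if c' = j then (if j.val + 1 = i then -(β+ε) else -β) * X c' c else 0)
      + (if j.val = c'.val + 1 then α (j.val + 1) * X c' c else 0) := by
    intro c'
    show (if j = c' then (if j.val + 1 = i then -(β+ε) else -β)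
      else if j.val = c'.val + 1 then α (j.val + 1) else 0) * X c' c = _
    rcases eq_or_ne j c' with rfl | hne
    · rw [if_pos rfl, if_pos rfl, if_neg (show ¬((j:ℕ) = (j:ℕ) + 1) by omega)]
      ring
    · rw [if_neg hne, if_neg (Ne.symm hne)]
      by_cases h2 : (j:ℕ) = (c':ℕ) + 1
      · rw [if_pos h2, if_pos h2]
        ring
      · rw [if_neg h2, if_neg h2]
        ring
  rw [Finset.sum_congr rfl fun c' _ => hsplit c', Finset.sum_add_distrib]
  congr 1
  · rw [Finset.sum_ite_eq' Finset.univ j fun c' => (if j.val + 1 = i then -(β+ε) else -β) * X c' c]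
    simp
  · rcases Nat.eq_zero_or_pos j.val with h0 | hpos
    · rw [dif_neg (by omega)]
      refine Finset.sum_eq_zero fun c' _ => ?_
      rw [if_neg (by omega)]
    · rw [dif_pos hpos]
      set c0 : Fin n := ⟨j.val - 1, by have := j.isLt; omega⟩ with hc0
      have hkey : ∀ c' : Fin n, ((j:ℕ) = (c':ℕ) + 1) ↔ (c' = c0) := by
        intro c'
        constructor
        · intro h
          refine Fin.ext ?_
          show (c' : ℕ) = (j : ℕ) - 1
          omega
        · intro h
          subst h
          show (j : ℕ) = (j:ℕ) - 1 + 1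
          omega
      have key2 : ∀ c' : Fin n, (if (j:ℕ) = (c':ℕ) + 1 then α (j.val + 1) * X c' c else 0)
          = (if c' = c0 then α (j.val + 1) * X c' c else 0) := by
        intro c'
        by_cases h : c' = c0
        · subst h
          rw [if_pos ((hkey _).mpr rfl), if_pos rfl]
        · rw [if_neg (fun hh => h ((hkey c').mp hh)), if_neg h]
      rw [Finset.sum_congr rfl fun c' _ => key2 c',
        Finset.sum_ite_eq' Finset.univ c0 fun c' => α (j.val + 1) * X c' c]
      simp

lemma pcm_pow_entry (n : ℕ) (hn : 1 ≤ n) (α : ℕ → ℝ) (β ε : ℝ) (i : ℕ) (hi : 1 ≤ i)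
    (k : ℕ) (j : Fin n) :
    (perturbedCascadeMatrix n α β ε i ^ k) j ⟨0, hn⟩ =
      (∏ l ∈ Finset.range j.val, α (l + 2)) *
        (if j.val + 1 < i then fBe (-β) k j.val else fAb (-(β+ε)) (-β) k j.val) := by
  induction k generalizing j with
  | zero =>
    rw [pow_zero, Matrix.one_apply]
    rcases Nat.eq_zero_or_pos j.val with h0 | hpos
    · rw [if_pos (Fin.ext h0), h0]
      rw [Finset.range_zero, Finset.prod_empty, one_mul]
      split_ifs with h
      · rw [fBe]; simp
      · rw [fAb]; simp [ccomp]
    · rw [if_neg (fun hh => by rw [hh] at hpos; simp at hpos)]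
      split_ifs with h
      · rw [fBe_zero_left _ _ hpos, mul_zero]
      · rw [fAb_zero_left _ _ _ hpos, mul_zero]
  | succ k ih =>
    rw [pow_succ', pcm_mul_apply]
    rcases Nat.eq_zero_or_pos j.val with h0 | hpos
    · rw [dif_neg (by omega), add_zero, ih j, h0]
      rw [Finset.range_zero, Finset.prod_empty, one_mul, one_mul]
      by_cases hone : (1 : ℕ) = i
      · rw [if_pos (by omega), if_neg (by omega), if_neg (by omega),
          fAb_zero_right, fAb_zero_right, pow_succ]
        ring
      · rw [if_neg (by omega), if_pos (by omega), if_pos (by omega),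
          fBe_zero_right, fBe_zero_right, pow_succ]
        ring
    · rw [dif_pos hpos, ih j, ih ⟨j.val - 1, by have := j.isLt; omega⟩]
      simp only []
      have hprod : (∏ l ∈ Finset.range j.val, α (l + 2))
          = (∏ l ∈ Finset.range (j.val - 1), α (l + 2)) * α (j.val + 1) := by
        obtain ⟨jv, hjv⟩ : ∃ jv, j.val = jv + 1 := ⟨j.val - 1, by omega⟩
        rw [hjv, Finset.prod_range_succ]
        congr 2
      rcases lt_trichotomy (j.val + 1) i with hlt | heq | hgt
      · -- below the perturbation: fBe everywhere, diagonal is -β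
        rw [if_neg (show ¬((j:ℕ)+1 = i) by omega), if_pos hlt,
          if_pos (show (j:ℕ) - 1 + 1 < i by omega)]
        rw [fBe_succ _ _ _ hpos, hprod, if_pos hlt]
        ring
      · -- at the perturbation: diagonal is -(β+ε)
        rw [if_pos heq, if_neg (show ¬((j:ℕ)+1 < i) by omega),
          if_pos (show (j:ℕ) - 1 + 1 < i by omega)]
        rw [fAb_succ_a _ _ _ _ hpos, hprod, if_neg (show ¬((j:ℕ)+1 < i) by omega)]
        ring
      · -- above the perturbation: diagonal -β, both fAb
        rw [if_neg (show ¬((j:ℕ)+1 = i) by omega), if_neg (show ¬((j:ℕ)+1 < i) by omega),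
          if_neg (show ¬((j:ℕ) - 1 + 1 < i) by omega)]
        rw [fAb_succ_b _ _ _ _ hpos, hprod, if_neg (show ¬((j:ℕ)+1 < i) by omega)]
        ring

lemma pcm_isUnit_det (n : ℕ) (α : ℕ → ℝ) (β ε : ℝ) (hβ : β ≠ 0) (hβε : β + ε ≠ 0) (i : ℕ) :
    IsUnit (perturbedCascadeMatrix n α β ε i).det := by
  have hlt : (perturbedCascadeMatrix n α β ε i).BlockTriangular OrderDual.toDual := by
    intro r c hrc
    have h1 : r < c := hrc
    unfold perturbedCascadeMatrix
    rw [if_neg (Fin.ne_of_lt h1), if_neg (by have := Fin.lt_iff_val_lt_val.mp h1; omega)]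
  rw [Matrix.det_of_lowerTriangular _ hlt]
  apply isUnit_iff_ne_zero.mpr
  apply Finset.prod_ne_zero_iff.mpr
  intro r _
  unfold perturbedCascadeMatrix
  rw [if_pos rfl]
  split_ifs
  · exact neg_ne_zero.mpr hβε
  · exact neg_ne_zero.mpr hβ

lemma pcm_inv_exp_entry (n : ℕ) (α : ℕ → ℝ) (β ε : ℝ) (hβ : β ≠ 0) (hβε : β + ε ≠ 0)
    (i : ℕ) (t : ℝ) (j c0 : Fin n) :
    ((perturbedCascadeMatrix n α β ε i)⁻¹
        * (NormedSpace.exp (t • perturbedCascadeMatrix n α β ε i) - 1)) j c0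
    = ∑' k : ℕ, (t ^ (k+1) * (((k+1).factorial : ℝ))⁻¹) *
        ((perturbedCascadeMatrix n α β ε i ^ k) j c0) := by
  letI : SeminormedRing (Matrix (Fin n) (Fin n) ℝ) := Matrix.linftyOpSemiNormedRing
  letI : NormedRing (Matrix (Fin n) (Fin n) ℝ) := Matrix.linftyOpNormedRing
  letI : NormedAlgebra ℝ (Matrix (Fin n) (Fin n) ℝ) := Matrix.linftyOpNormedAlgebra
  set H := perturbedCascadeMatrix n α β ε i with hH
  set u : ℕ → Matrix (Fin n) (Fin n) ℝ :=
    fun k => (t ^ (k+1) * (((k+1).factorial : ℝ))⁻¹) • H ^ k with hu_def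
  set v : ℕ → Matrix (Fin n) (Fin n) ℝ := fun k => ((k.factorial : ℝ))⁻¹ • (t • H) ^ k with hv_def
  have hvnorm : Summable fun k => ‖v k‖ :=
    NormedSpace.norm_expSeries_summable' (𝕂 := ℝ) (t • H)
  have hv : Summable v := NormedSpace.expSeries_summable' (𝕂 := ℝ) (t • H)
  have huv : ∀ k, u k = (t / ((k:ℝ)+1)) • v k := by
    intro k
    rw [hu_def, hv_def]
    simp only [smul_pow, smul_smul]
    congr 1
    rw [Nat.factorial_succ]
    push_cast
    have h1 : ((k.factorial : ℝ)) ≠ 0 := Nat.cast_ne_zero.mpr (Nat.factorial_ne_zero k)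
    have h2 : ((k:ℝ) + 1) ≠ 0 := by positivity
    field_simp
    ring
  have hu : Summable u := by
    refine Summable.of_norm_bounded (hvnorm.mul_left |t|) fun k => ?_
    rw [huv k, norm_smul]
    apply mul_le_mul_of_nonneg_right _ (norm_nonneg _)
    rw [Real.norm_eq_abs, abs_div]
    have : |(k:ℝ) + 1| = (k:ℝ) + 1 := abs_of_pos (by positivity)
    rw [this]
    exact div_le_self (abs_nonneg t) (by simp)
  -- H * (∑' u) = exp (t • H) - 1
  have hmul : HasSum (fun k => H * u k) (H * ∑' k, u k) := hu.hasSum.mul_left H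
  have hterm : ∀ k, H * u k = v (k+1) := by
    intro k
    rw [hu_def, hv_def]
    simp only [smul_pow, smul_smul, mul_smul_comm]
    rw [← pow_succ']
    congr 1
    ring
  rw [funext hterm] at hmul
  have hvsum : HasSum v (NormedSpace.exp (t • H)) := by
    rw [NormedSpace.exp_eq_tsum (𝕂 := ℝ)]
    exact hv.hasSum
  have hshift : HasSum (fun k => v (k+1)) (NormedSpace.exp (t • H) - 1) := by
    refine (hasSum_nat_add_iff 1).mpr ?_
    have hv0 : ∑ x ∈ Finset.range 1, v x = 1 := by
      rw [Finset.sum_range_one, hv_def]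
      simp
    rw [hv0]
    simpa using hvsum
  have hHT : H * (∑' k, u k) = NormedSpace.exp (t • H) - 1 := hmul.unique hshift
  have hdet := pcm_isUnit_det n α β ε hβ hβε i
  have hfinal : H⁻¹ * (NormedSpace.exp (t • H) - 1) = ∑' k, u k := by
    rw [← hHT, ← mul_assoc, Matrix.nonsing_inv_mul _ hdet, one_mul]
  rw [hfinal]
  -- now entrywise
  have hentry : HasSum (fun k => u k j c0) ((∑' k, u k) j c0) := by
    have hcont : Continuous fun M : Matrix (Fin n) (Fin n) ℝ => M j c0 :=
      continuous_id.matrix_elem j c0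
    exact hu.hasSum.map (AddMonoidHom.mk' (fun M : Matrix (Fin n) (Fin n) ℝ => M j c0)
      (fun _ _ => rfl)) hcont
  rw [← hentry.tsum_eq]
  refine tsum_congr fun k => ?_
  rw [hu_def]
  simp [Matrix.smul_apply, smul_eq_mul]


lemma mulVec_std (n : ℕ) (hn : 1 ≤ n) (M : Matrix (Fin n) (Fin n) ℝ) (j : Fin n) :
    (M *ᵥ stdBasisVec n 1) j = M j ⟨0, hn⟩ := by
  have hstd : stdBasisVec n 1 = Pi.single (⟨0, hn⟩ : Fin n) 1 := by
    funext r
    rw [Pi.single_apply]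
    show (if r.val + 1 = 1 then (1:ℝ) else 0) = _
    by_cases hr : r = ⟨0, hn⟩
    · subst hr
      rw [if_pos rfl, if_pos rfl]
    · rw [if_neg (fun hh => hr (Fin.ext (show (r:ℕ) = 0 by omega))), if_neg hr]
  rw [hstd, Matrix.mulVec_single]
  simp

end Aux

/-- each `H_i` is invertible, and for perturbation positions `i < h`, the
constant-stimulus solutions `α₁ H⁻¹ (exp(t H) - I) e₁` for `H = H_i` and `H = H_h` agree on
every component `j` with `h ≤ j ≤ n` (and on every component `j < i`); in particular the final
output is independent of the position of the perturbation. -/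
theorem perturbed_cascade_position_independence_const
    (n : ℕ) (hn : 1 ≤ n) (α : ℕ → ℝ) (β ε : ℝ) (hβ : β ≠ 0) (hβε : β + ε ≠ 0) :
    (∀ i : ℕ, 1 ≤ i → i ≤ n → IsUnit (perturbedCascadeMatrix n α β ε i)) ∧
    (∀ i h : ℕ, 1 ≤ i → i < h → h ≤ n →
      ∀ j : Fin n, (h ≤ j.val + 1 ∨ j.val + 1 < i) → ∀ t : ℝ,
        (α 1 • (((perturbedCascadeMatrix n α β ε i)⁻¹
            * (NormedSpace.exp (t • perturbedCascadeMatrix n α β ε i) - 1))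
            *ᵥ stdBasisVec n 1)) j
        = (α 1 • (((perturbedCascadeMatrix n α β ε h)⁻¹
            * (NormedSpace.exp (t • perturbedCascadeMatrix n α β ε h) - 1))
            *ᵥ stdBasisVec n 1)) j) := by
  constructor
  · intro i _ _
    exact (Matrix.isUnit_iff_isUnit_det _).mpr (pcm_isUnit_det n α β ε hβ hβε i)
  · intro i h hi hih hhn j hj t
    simp only [Pi.smul_apply, smul_eq_mul]
    rw [mulVec_std n hn, mulVec_std n hn,
      pcm_inv_exp_entry n α β ε hβ hβε i t j ⟨0, hn⟩,
      pcm_inv_exp_entry n α β ε hβ hβε h t j ⟨0, hn⟩]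
    congr 1
    refine tsum_congr fun k => ?_
    rw [pcm_pow_entry n hn α β ε i (by omega) k j,
      pcm_pow_entry n hn α β ε h (by omega) k j]
    rcases hj with hj | hj
    · rw [if_neg (by omega), if_neg (by omega)]
    · rw [if_pos (by omega), if_pos (by omega)]
end

section
/- Let n ≥ 1 be an integer, let α_1, α_2,…,α_n, β, ε, λ be real numbers with β ≠ 0, β + ε ≠ 0, β ≠ λ, and β + ε ≠ λ, and for an index 1 ≤ i ≤ n let H_i be the ε-perturbed cascade rate matrix. Then H_i and I + λH_i⁻¹ are invertible, and for any two indices 1 ≤ i < h ≤ n, the solutions of the exponentially-decaying-stimulus cascades with perturbation at position i and at position h agree on all components at or below position h: for every index j with h ≤ j ≤ n (and also for every j with 1 ≤ j < i) and every real t, the j-th component of α_1 (exp(tH_i) − e^{−λt} I) H_i⁻¹ (I + λH_i⁻¹)⁻¹ e_1 equals the j-th component of α_1 (exp(tH_h) − e^{−λt} I) H_h⁻¹ (I + λH_h⁻¹)⁻¹ e_1. -/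
open Matrix

/-- The solution at time `t` of the exponentially-decaying-stimulus cascade
`ẋ = H x + α₁ e^{-λ t} e₁`, `x 0 = 0`, namely
`α₁ (exp(t H) - e^{-λ t} I) H⁻¹ (I + λ H⁻¹)⁻¹ e₁`. -/
noncomputable def decaySol (n : ℕ) (α₁ lam : ℝ) (H : Matrix (Fin n) (Fin n) ℝ) (t : ℝ) :
    Fin n → ℝ :=
  α₁ • (((NormedSpace.exp (t • H) - Real.exp (-lam * t) • (1 : Matrix (Fin n) (Fin n) ℝ))
    * H⁻¹ * (1 + lam • H⁻¹)⁻¹) *ᵥ stdBasisVec n 1)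

namespace CascadeAux

noncomputable def Nf (a : ℝ) : ℕ → ℕ → ℝ
  | 0, j => if j = 0 then 1 else 0
  | (k+1), j => a * Nf a k j + (if j = 0 then 0 else Nf a k (j-1))

noncomputable def Wf (a b : ℝ) : ℕ → ℕ → ℝ
  | 0, _ => 0
  | (k+1), j => a * Wf a b k j + (if j = 1 then b ^ k else if j = 0 then 0 else Wf a b k (j-1))

theorem Wf_swap (a b : ℝ) : ∀ k, ∀ j, 1 ≤ j → Wf a b (k+1) j = b * Wf a b k j + Nf a k (j-1) := by
  intro k
  induction k with
  | zero =>
    intro j hj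
    match j, hj with
    | 1, _ => simp [Wf, Nf]
    | (m+2), _ => simp [Wf, Nf]
  | succ k IH =>
    intro j hj
    match j, hj with
    | 1, _ =>
      have hdef : Wf a b (k+1) 1 = a * Wf a b k 1 + b ^ k := by simp [Wf]
      have hIH : Wf a b (k+1) 1 = b * Wf a b k 1 + Nf a k 0 := by simpa using IH 1 le_rfl
      rw [show Wf a b (k+2) 1 = a * Wf a b (k+1) 1 + b ^ (k+1) from by simp [Wf]]
      rw [show Nf a (k+1) (1-1) = a * Nf a k 0 + 0 from by simp [Nf]]
      conv_lhs => rw [hIH]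
      conv_rhs => rw [hdef]
      ring
    | (m+2), _ =>
      have hdef2 : Wf a b (k+1) (m+2) = a * Wf a b k (m+2) + Wf a b k (m+1) := by simp [Wf]
      have hIH2 : Wf a b (k+1) (m+2) = b * Wf a b k (m+2) + Nf a k (m+1) := by
        simpa using IH (m+2) (by omega)
      have hIH1 : Wf a b (k+1) (m+1) = b * Wf a b k (m+1) + Nf a k m := by
        simpa using IH (m+1) (by omega)
      rw [show Wf a b (k+2) (m+2) = a * Wf a b (k+1) (m+2) + Wf a b (k+1) (m+1) from by
        simp [Wf]]
      rw [show Nf a (k+1) (m+2-1) = a * Nf a k (m+1) + Nf a k m from by simp [Nf]]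
      conv_lhs => rw [hIH2, hIH1]
      conv_rhs => rw [hdef2]
      ring

/-- The closed-form entry value: `Nf` when the perturbed position `i` is below row `j`,
otherwise the one-perturbed value. -/
noncomputable def Ef (a b : ℝ) (i k j : ℕ) : ℝ :=
  if j + 1 < i then Nf a k j else if j = 0 then b ^ k else Wf a b k j

theorem Ef_zero (a b : ℝ) (i j : ℕ) : Ef a b i 0 j = if j = 0 then 1 else 0 := by
  unfold Ef
  split_ifs with h1 h2 h3 <;> simp_all [Nf, Wf]

theorem Ef_succ_zero (a b : ℝ) (i : ℕ) (hi : 1 ≤ i) (k : ℕ) :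
    Ef a b i (k+1) 0 = (if 0 + 1 = i then b else a) * Ef a b i k 0 := by
  unfold Ef
  by_cases h : i = 1
  · subst h; simp [pow_succ, mul_comm]
  · have h2 : 0 + 1 < i := by omega
    simp only [h2, if_pos, if_neg (by omega : ¬ (0 + 1 = i))]
    simp [Nf]

theorem Ef_succ (a b : ℝ) (i : ℕ) (hi : 1 ≤ i) (k jv : ℕ) :
    Ef a b i (k+1) (jv+1) = (if jv + 1 + 1 = i then b else a) * Ef a b i k (jv+1)
      + Ef a b i k jv := by
  rcases lt_trichotomy (jv + 2) i with h1 | h1 | h1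
  · -- everything below the perturbed position: Nf recursion
    unfold Ef
    rw [if_pos (by omega : jv + 1 + 1 < i), if_pos (by omega : jv + 1 + 1 < i),
      if_pos (by omega : jv + 1 < i), if_neg (by omega : ¬ (jv + 1 + 1 = i))]
    simp [Nf]
  · -- the perturbed row itself: swap identity
    unfold Ef
    rw [if_neg (by omega : ¬ (jv + 1 + 1 < i)), if_neg (by omega : ¬ (jv + 1 + 1 < i)),
      if_pos (by omega : jv + 1 < i), if_pos (by omega : jv + 1 + 1 = i),
      if_neg (by omega : ¬ (jv + 1 = 0)), if_neg (by omega : ¬ (jv + 1 = 0))]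
    simpa using Wf_swap a b k (jv+1) (by omega)
  · -- above the perturbed position: Wf recursion
    unfold Ef
    rw [if_neg (by omega : ¬ (jv + 1 + 1 < i)), if_neg (by omega : ¬ (jv + 1 + 1 < i)),
      if_neg (by omega : ¬ (jv + 1 < i)), if_neg (by omega : ¬ (jv + 1 + 1 = i)),
      if_neg (by omega : ¬ (jv + 1 = 0)), if_neg (by omega : ¬ (jv + 1 = 0))]
    rw [show Wf a b (k+1) (jv+1)
        = a * Wf a b k (jv+1) + (if jv + 1 = 1 then b ^ k else if jv + 1 = 0 then 0
          else Wf a b k jv) from by simp [Wf]]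
    by_cases hjv : jv = 0
    · subst hjv; simp
    · rw [if_neg (by omega : ¬ (jv + 1 = 1)), if_neg (by omega : ¬ (jv + 1 = 0)),
        if_neg hjv]
/-- The shifted matrix `A = H + lam • 1`. -/
noncomputable def Amat (n : ℕ) (α : ℕ → ℝ) (β ε lam : ℝ) (i : ℕ) :
    Matrix (Fin n) (Fin n) ℝ :=
  fun r c =>
    if r = c then (if r.val + 1 = i then lam - (β + ε) else lam - β)
    else if r.val = c.val + 1 then α (r.val + 1)
    else 0

theorem Amat_eq (n : ℕ) (α : ℕ → ℝ) (β ε lam : ℝ) (i : ℕ) :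
    Amat n α β ε lam i = perturbedCascadeMatrix n α β ε i + lam • 1 := by
  ext r c
  by_cases h : r = c
  · subst h
    by_cases h2 : r.val + 1 = i <;>
      simp [Amat, perturbedCascadeMatrix, Matrix.one_apply, h2] <;> ring
  · simp [Amat, perturbedCascadeMatrix, Matrix.one_apply, h]

theorem Amat_pow_entry (n : ℕ) (hn : 0 < n) (α : ℕ → ℝ) (β ε lam : ℝ)
    (i : ℕ) (hi : 1 ≤ i) (k : ℕ) (j : Fin n) :
    (Amat n α β ε lam i ^ k) j ⟨0, hn⟩
      = (∏ m ∈ Finset.range j.val, α (m + 2)) * Ef (lam - β) (lam - (β + ε)) i k j.val := by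
  induction k generalizing j with
  | zero =>
    rw [pow_zero, Ef_zero]
    by_cases h0 : j.val = 0
    · have : j = ⟨0, hn⟩ := Fin.ext h0
      simp [this, Matrix.one_apply, h0]
    · have : j ≠ ⟨0, hn⟩ := fun h => h0 (by simp [h])
      simp [Matrix.one_apply, this, h0]
  | succ k IH =>
    rw [pow_succ', Matrix.mul_apply]
    rcases Nat.eq_zero_or_pos j.val with h0 | h0
    · -- first row
      have hj : j = ⟨0, hn⟩ := Fin.ext h0
      subst hj
      rw [Finset.sum_eq_single (⟨0, hn⟩ : Fin n)]
      · rw [IH]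
        simp only [Finset.range_zero, Finset.prod_empty, one_mul]
        rw [Ef_succ_zero _ _ _ hi]
        simp [Amat]
      · intro c _ hc
        have h1 : ¬ ((⟨0, hn⟩ : Fin n) = c) := fun h => hc h.symm
        have h2 : ¬ ((0:ℕ) = c.val + 1) := by omega
        simp [Amat, h1, h2]
      · intro h; exact absurd (Finset.mem_univ _) h
    · -- row jv + 1
      obtain ⟨jv, hjval⟩ : ∃ jv, j.val = jv + 1 := ⟨j.val - 1, by omega⟩
      have hjvlt : jv < n := by omega
      set jp : Fin n := ⟨jv, hjvlt⟩ with hjp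
      have hne : j ≠ jp := by
        intro h; rw [Fin.ext_iff] at h; simp [hjp] at h; omega
      have hstep : ∀ c : Fin n, Amat n α β ε lam i j c * (Amat n α β ε lam i ^ k) c ⟨0, hn⟩
          = (if c = j then (if j.val + 1 = i then lam - (β + ε) else lam - β)
              * (Amat n α β ε lam i ^ k) j ⟨0, hn⟩ else 0)
            + (if c = jp then α (j.val + 1) * (Amat n α β ε lam i ^ k) jp ⟨0, hn⟩ else 0) := by
        intro c
        by_cases h1 : c = j
        · subst h1
          rw [if_pos rfl, if_neg hne]
          simp [Amat]
        · rw [if_neg h1]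
          by_cases h2 : c = jp
          · subst h2
            rw [if_pos rfl]
            have hcc : ¬ (j = jp) := hne
            have hval : j.val = jp.val + 1 := by simp [hjp]; omega
            simp [Amat, hcc, hval]
          · rw [if_neg h2]
            have hcc : ¬ (j = c) := fun h => h1 h.symm
            have hval : ¬ (j.val = c.val + 1) := by
              intro h
              apply h2
              rw [Fin.ext_iff]
              simp [hjp]
              omega
            simp [Amat, hcc, hval]
      rw [Finset.sum_congr rfl fun c _ => hstep c, Finset.sum_add_distrib,
        Finset.sum_ite_eq' Finset.univ, Finset.sum_ite_eq' Finset.univ,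
        if_pos (Finset.mem_univ _), if_pos (Finset.mem_univ _)]
      rw [IH j, IH jp]
      have hjpval : jp.val = jv := rfl
      rw [hjpval, hjval, Ef_succ _ _ _ hi]
      rw [show α (jv + 1 + 1) = α (jv + 2) by norm_num]
      rw [Finset.prod_range_succ]
      split_ifs <;> ring
set_option maxHeartbeats 1000000 in

theorem decaySol_entry {n : ℕ} (hn : 0 < n) (lam : ℝ) (H A : Matrix (Fin n) (Fin n) ℝ)
    (hH : IsUnit H.det) (hA : IsUnit A.det) (hAH : A = H + lam • 1)
    (α₁ t : ℝ) (j : Fin n) :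
    decaySol n α₁ lam H t j
      = α₁ * (Real.exp (-lam * t)
          * ∑' k : ℕ, (t ^ (k+1) * (((k+1).factorial : ℝ))⁻¹) * (A ^ k) j ⟨0, hn⟩) := by
  letI : SeminormedRing (Matrix (Fin n) (Fin n) ℝ) := Matrix.linftyOpSemiNormedRing
  letI : NormedRing (Matrix (Fin n) (Fin n) ℝ) := Matrix.linftyOpNormedRing
  letI : NormedAlgebra ℝ (Matrix (Fin n) (Fin n) ℝ) := Matrix.linftyOpNormedAlgebra
  have hning : (1 + lam • H⁻¹) * H = A := by
    rw [add_mul, one_mul, Matrix.smul_mul, Matrix.nonsing_inv_mul H hH, hAH]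
  have hinv : H⁻¹ * (1 + lam • H⁻¹)⁻¹ = A⁻¹ := by
    rw [← hning, Matrix.mul_inv_rev]
  have hsmul : t • H = t • A + (-(lam * t)) • (1 : Matrix (Fin n) (Fin n) ℝ) := by
    rw [hAH]; module
  have hexp1 : NormedSpace.exp ((-(lam*t)) • (1 : Matrix (Fin n) (Fin n) ℝ))
      = Real.exp (-(lam*t)) • (1 : Matrix (Fin n) (Fin n) ℝ) := by
    rw [← Algebra.algebraMap_eq_smul_one]
    erw [← NormedSpace.algebraMap_exp_comm]
    rw [Algebra.algebraMap_eq_smul_one, Real.exp_eq_exp_ℝ]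
  have hexp : NormedSpace.exp (t • H)
      = Real.exp (-lam * t) • NormedSpace.exp (t • A) := by
    rw [hsmul, Matrix.exp_add_of_commute _ _ ((Commute.one_right (t • A)).smul_right _), hexp1,
      mul_smul_comm, mul_one, neg_mul]
  have h0 : HasSum (fun k : ℕ => ((k.factorial : ℝ))⁻¹ • (t • A) ^ k)
      (NormedSpace.exp (t • A)) := NormedSpace.exp_series_hasSum_exp' (t • A)
  have h1 : HasSum (fun k : ℕ => (((k+1).factorial : ℝ))⁻¹ • (t • A) ^ (k+1))
      (NormedSpace.exp (t • A) - 1) := by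
    refine (hasSum_nat_add_iff
      (f := fun k : ℕ => ((k.factorial : ℝ))⁻¹ • (t • A) ^ k) 1).2 ?_
    simpa using h0
  have h2 := h1.mul_right A⁻¹
  have hterm : ∀ k : ℕ, ((((k+1).factorial : ℝ))⁻¹ • (t • A) ^ (k+1)) * A⁻¹
      = (t ^ (k+1) * (((k+1).factorial : ℝ))⁻¹) • A ^ k := by
    intro k
    have hpow : A ^ (k+1) * A⁻¹ = A ^ k := by
      rw [pow_succ, mul_assoc, Matrix.mul_nonsing_inv A hA, mul_one]
    rw [smul_pow, smul_smul, smul_mul_assoc, hpow,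
      mul_comm ((((k+1).factorial : ℝ))⁻¹) (t ^ (k+1))]
  have h3 : HasSum (fun k : ℕ => (t ^ (k+1) * (((k+1).factorial : ℝ))⁻¹) • A ^ k)
      ((NormedSpace.exp (t • A) - 1) * A⁻¹) := by
    simpa only [hterm] using h2
  have φcont : Continuous (fun X : Matrix (Fin n) (Fin n) ℝ => X j ⟨0, hn⟩) :=
    (continuous_apply _).comp (continuous_apply j)
  have h4 := h3.map (AddMonoidHom.mk' (fun X : Matrix (Fin n) (Fin n) ℝ => X j ⟨0, hn⟩)
    (fun X Y => rfl)) φcont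
  have h5 : ((NormedSpace.exp (t • A) - 1) * A⁻¹) j ⟨0, hn⟩
      = ∑' k : ℕ, (t ^ (k+1) * (((k+1).factorial : ℝ))⁻¹) * (A ^ k) j ⟨0, hn⟩ := by
    refine (HasSum.tsum_eq ?_).symm
    exact h4
  have hmv : ∀ M : Matrix (Fin n) (Fin n) ℝ, (M *ᵥ stdBasisVec n 1) j = M j ⟨0, hn⟩ := by
    intro M
    have hv : ∀ c : Fin n, M j c * stdBasisVec n 1 c
        = if c = (⟨0, hn⟩ : Fin n) then M j c else 0 := by
      intro c
      by_cases hc : c = (⟨0, hn⟩ : Fin n)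
      · subst hc; simp [stdBasisVec]
      · have hne : ¬ (c.val + 1 = 1) := by
          intro h
          have h0 : c.val = 0 := by omega
          exact hc (Fin.ext (by rw [h0]))
        simp [stdBasisVec, hne, hc]
        intro h0; exact absurd h0 (by omega)
    rw [Matrix.mulVec, dotProduct, Finset.sum_congr rfl fun c _ => hv c,
      Finset.sum_ite_eq' Finset.univ, if_pos (Finset.mem_univ _)]
  have hM : (NormedSpace.exp (t • H) - Real.exp (-lam * t) • 1) * H⁻¹ * (1 + lam • H⁻¹)⁻¹
      = Real.exp (-lam * t) • ((NormedSpace.exp (t • A) - 1) * A⁻¹) := by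
    rw [mul_assoc, hinv, hexp, ← smul_sub, Matrix.smul_mul]
  unfold decaySol
  rw [Pi.smul_apply, smul_eq_mul, hmv, hM, Matrix.smul_apply, smul_eq_mul, h5]


theorem Amat_blockTriangular (n : ℕ) (α : ℕ → ℝ) (β ε lam : ℝ) (i : ℕ) :
    (Amat n α β ε lam i).BlockTriangular OrderDual.toDual := by
  intro r c hrc
  have h1 : r < c := hrc
  have h2 : ¬ (r = c) := by intro h; subst h; exact lt_irrefl _ h1
  have h3 : ¬ (r.val = c.val + 1) := by
    have := (Fin.lt_iff_val_lt_val.1 h1); omega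
  simp [Amat, h2, h3]

theorem pert_blockTriangular (n : ℕ) (α : ℕ → ℝ) (β ε : ℝ) (i : ℕ) :
    (perturbedCascadeMatrix n α β ε i).BlockTriangular OrderDual.toDual := by
  intro r c hrc
  have h1 : r < c := hrc
  have h2 : ¬ (r = c) := by intro h; subst h; exact lt_irrefl _ h1
  have h3 : ¬ (r.val = c.val + 1) := by
    have := (Fin.lt_iff_val_lt_val.1 h1); omega
  simp [perturbedCascadeMatrix, h2, h3]

theorem pert_det_isUnit {n : ℕ} {α : ℕ → ℝ} {β ε : ℝ} (hβ : β ≠ 0) (hβε : β + ε ≠ 0)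
    (i : ℕ) : IsUnit (perturbedCascadeMatrix n α β ε i).det := by
  rw [Matrix.det_of_lowerTriangular _ (pert_blockTriangular n α β ε i)]
  rw [isUnit_iff_ne_zero]
  rw [Finset.prod_ne_zero_iff]
  intro r _
  have hd : perturbedCascadeMatrix n α β ε i r r
      = (if r.val + 1 = i then -(β + ε) else -β) := by simp [perturbedCascadeMatrix]
  rw [hd]
  by_cases hr : r.val + 1 = i
  · rw [if_pos hr]; exact neg_ne_zero.2 hβε
  · rw [if_neg hr]; exact neg_ne_zero.2 hβ

theorem Amat_det_isUnit {n : ℕ} {α : ℕ → ℝ} {β ε lam : ℝ} (hbl : β ≠ lam)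
    (hbel : β + ε ≠ lam) (i : ℕ) : IsUnit (Amat n α β ε lam i).det := by
  rw [Matrix.det_of_lowerTriangular _ (Amat_blockTriangular n α β ε lam i)]
  rw [isUnit_iff_ne_zero]
  rw [Finset.prod_ne_zero_iff]
  intro r _
  have hd : Amat n α β ε lam i r r
      = (if r.val + 1 = i then lam - (β + ε) else lam - β) := by simp [Amat]
  rw [hd]
  by_cases hr : r.val + 1 = i
  · rw [if_pos hr]; exact sub_ne_zero.2 (Ne.symm hbel)
  · rw [if_neg hr]; exact sub_ne_zero.2 (Ne.symm hbl)

end CascadeAux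

open CascadeAux in
/-- each `H_i` and `I + λ H_i⁻¹` are invertible, and for perturbation positions
`i < h`, the exponentially-decaying-stimulus solutions for `H_i` and `H_h` agree on every
component `j` with `h ≤ j ≤ n` (and on every component `j < i`). -/
theorem perturbed_cascade_position_independence_decay
    (n : ℕ) (hn : 1 ≤ n) (α : ℕ → ℝ) (β ε lam : ℝ)
    (hβ : β ≠ 0) (hβε : β + ε ≠ 0) (hbl : β ≠ lam) (hbel : β + ε ≠ lam) :
    (∀ i : ℕ, 1 ≤ i → i ≤ n → IsUnit (perturbedCascadeMatrix n α β ε i) ∧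
      IsUnit (1 + lam • (perturbedCascadeMatrix n α β ε i)⁻¹)) ∧
    (∀ i h : ℕ, 1 ≤ i → i < h → h ≤ n →
      ∀ j : Fin n, (h ≤ j.val + 1 ∨ j.val + 1 < i) → ∀ t : ℝ,
        decaySol n (α 1) lam (perturbedCascadeMatrix n α β ε i) t j
        = decaySol n (α 1) lam (perturbedCascadeMatrix n α β ε h) t j) := by
  classical
  have hn' : 0 < n := hn
  have hone : ∀ i : ℕ, (1 : Matrix (Fin n) (Fin n) ℝ)
      + lam • (perturbedCascadeMatrix n α β ε i)⁻¹
      = (perturbedCascadeMatrix n α β ε i)⁻¹ * Amat n α β ε lam i := by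
    intro i
    rw [Amat_eq, Matrix.mul_add, Matrix.mul_smul,
      Matrix.nonsing_inv_mul _ (pert_det_isUnit hβ hβε i), Matrix.mul_one]
  constructor
  · intro i hi1 hi2
    refine ⟨(Matrix.isUnit_iff_isUnit_det _).2 (pert_det_isUnit hβ hβε i), ?_⟩
    rw [hone i]
    exact ((Matrix.isUnit_iff_isUnit_det _).2
        ((perturbedCascadeMatrix n α β ε i).isUnit_nonsing_inv_det
          (pert_det_isUnit hβ hβε i))).mul
      ((Matrix.isUnit_iff_isUnit_det _).2 (Amat_det_isUnit hbl hbel i))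
  · intro i h hi1 hih hhn j hj t
    rw [decaySol_entry hn' lam _ (Amat n α β ε lam i) (pert_det_isUnit hβ hβε i)
      (Amat_det_isUnit hbl hbel i) (Amat_eq n α β ε lam i) (α 1) t j]
    rw [decaySol_entry hn' lam _ (Amat n α β ε lam h) (pert_det_isUnit hβ hβε h)
      (Amat_det_isUnit hbl hbel h) (Amat_eq n α β ε lam h) (α 1) t j]
    congr 2
    refine tsum_congr fun k => ?_
    rw [Amat_pow_entry n hn' α β ε lam i hi1 k j,
      Amat_pow_entry n hn' α β ε lam h (by omega) k j]
    have hEf : Ef (lam - β) (lam - (β + ε)) i k j.val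
        = Ef (lam - β) (lam - (β + ε)) h k j.val := by
      unfold Ef
      rcases hj with hj1 | hj2
      · rw [if_neg (by omega : ¬ (j.val + 1 < i)), if_neg (by omega : ¬ (j.val + 1 < h)),
          if_neg (by omega : ¬ (j.val = 0))]
      · rw [if_pos (by omega : j.val + 1 < i), if_pos (by omega : j.val + 1 < h)]
    rw [hEf]
end

section
/- Let n ≥ 1 be an integer, let α_1,…,α_n, β, ε be real numbers with ε ≠ 0, let 1 ≤ i ≤ n, let H_i be the ε-perturbed cascade rate matrix, let Q_i be the generalised-eigenvector matrix, and let J be the n×n matrix with J(1,1) = −(β+ε), J(k,k) = −β for 2 ≤ k ≤ n, J(k,k+1) = 1 for 2 ≤ k ≤ n−1, and all other entries zero. Then H_i Q_i = Q_i J; that is, the Jordan normal form J of H_i is independent of the position i of the perturbation. -/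
open Matrix

/-- `πⱼ = ∏_{l=1}^j α_l` (1-based product of activation rates). -/
noncomputable def piProd (α : ℕ → ℝ) (j : ℕ) : ℝ := ∏ l ∈ Finset.Icc 1 j, α l

/-- The eigenvector `q₁` of `H_i` (first column of `Q_i`), with 1-based entries
`q₁(j) = 0` for `j < i` and `q₁(j) = πⱼ (-1/ε)^{j-1}` for `j ≥ i`. -/
noncomputable def qOne (n : ℕ) (α : ℕ → ℝ) (ε : ℝ) (i : ℕ) : Fin n → ℝ :=
  fun r =>
    if r.val + 1 < i then 0 else piProd α (r.val + 1) * (-1 / ε) ^ r.val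

/-- The generalised eigenvector `v_k` of `H_i` associated with `-β` (1-based entries `j`):
if `i ≤ k` then `v_k(j) = 0` for `j ≤ k` and `v_k(j) = -πⱼ (-1/ε)^{j-k}` for `j > k`;
if `i > k` then `v_k(k) = π_k`, `v_k(j) = 0` for other `j < i`, and
`v_k(j) = -πⱼ (-1/ε)^{j-k}` for `j ≥ i`. -/
noncomputable def genEigVec (n : ℕ) (α : ℕ → ℝ) (ε : ℝ) (i k : ℕ) : Fin n → ℝ :=
  fun r =>
    let j := r.val + 1
    if i ≤ k then
      (if j ≤ k then 0 else -(piProd α j) * (-1 / ε) ^ (j - k))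
    else
      if j = k then piProd α k
      else if j < i then 0
      else -(piProd α j) * (-1 / ε) ^ (j - k)

/-- The generalised-eigenvector matrix `Q_i`: its first column is `q₁` and, for each
`1 ≤ k ≤ n-1`, its column `n-k+1` is `v_k`. -/
noncomputable def Qmat (n : ℕ) (α : ℕ → ℝ) (ε : ℝ) (i : ℕ) : Matrix (Fin n) (Fin n) ℝ :=
  fun r c =>
    if c.val = 0 then qOne n α ε i r
    else genEigVec n α ε i (n - (c.val + 1) + 1) r

/-- The Jordan normal form `J`: `J(1,1) = -(β+ε)`, `J(k,k) = -β` for `2 ≤ k ≤ n`,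
`J(k,k+1) = 1` for `2 ≤ k ≤ n-1`, zeros elsewhere. -/
noncomputable def Jmat (n : ℕ) (β ε : ℝ) : Matrix (Fin n) (Fin n) ℝ :=
  fun r c =>
    if r = c then (if r.val = 0 then -(β + ε) else -β)
    else if 1 ≤ r.val ∧ c.val = r.val + 1 then 1
    else 0

lemma piProd_succ (α : ℕ → ℝ) (j : ℕ) : piProd α (j+1) = piProd α j * α (j+1) := by
  unfold piProd
  rw [Finset.prod_Icc_succ_top (by omega)]

noncomputable def q1f (α : ℕ → ℝ) (ε : ℝ) (i j : ℕ) : ℝ :=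
  if j < i then 0 else piProd α j * (-1/ε)^(j-1)

noncomputable def vf (α : ℕ → ℝ) (ε : ℝ) (i k j : ℕ) : ℝ :=
  if i ≤ k then (if j ≤ k then 0 else -(piProd α j) * (-1/ε)^(j-k))
  else if j = k then piProd α k
  else if j < i then 0
  else -(piProd α j) * (-1/ε)^(j-k)

lemma vf_top (α : ℕ → ℝ) (ε : ℝ) (i k j : ℕ) (h1 : i ≤ k) (h2 : j ≤ k) :
    vf α ε i k j = 0 := by simp [vf, h1, h2]

lemma col0 (α : ℕ → ℝ) (β ε : ℝ) (hε : ε ≠ 0) (i : ℕ) (hi : 1 ≤ i) (j : ℕ) (hj : 1 ≤ j) :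
    (if j = i then -(β+ε) else -β) * q1f α ε i j
      + (if 2 ≤ j then α j * q1f α ε i (j-1) else 0)
    = -(β+ε) * q1f α ε i j := by
  rcases lt_trichotomy j i with h | h | h
  · have h' : j - 1 < i := by omega
    simp [q1f, h, h']
  · subst h
    have h' : j - 1 < j := by omega
    simp [q1f, h']
  · -- j > i ≥ 1, so j ≥ 2
    obtain ⟨m, rfl⟩ : ∃ m, j = m + 2 := ⟨j - 2, by omega⟩
    have h1 : ¬ (m + 2 < i) := by omega
    have h2 : ¬ (m + 2 - 1 < i) := by omega
    have h3 : m + 2 ≠ i := by omega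
    simp only [q1f, if_neg h1, if_neg h2, if_neg h3, if_pos (by omega : 2 ≤ m + 2)]
    have hp : piProd α (m+2) = piProd α (m+1) * α (m+2) := piProd_succ α (m+1)
    have e1 : m + 2 - 1 = m + 1 := by omega
    have e2 : m + 1 - 1 = m := by omega
    rw [e1, e2, hp, pow_succ]
    field_simp

lemma colv (α : ℕ → ℝ) (β ε : ℝ) (hε : ε ≠ 0) (i : ℕ) (hi : 1 ≤ i) (k j : ℕ)
    (hk : 1 ≤ k) (hj : 1 ≤ j) :
    (if j = i then -(β+ε) else -β) * vf α ε i k j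
      + (if 2 ≤ j then α j * vf α ε i k (j-1) else 0)
    = -β * vf α ε i k j + vf α ε i (k+1) j := by
  rcases le_or_gt i k with hik | hik
  · -- case A : i ≤ k (and hence i ≤ k+1)
    have hik1 : i ≤ k + 1 := by omega
    rcases le_or_gt j (k+1) with hjk | hjk
    · -- j ≤ k+1 : everything relevant vanishes except matched -β terms
      have h1 : vf α ε i k (j-1) = 0 := vf_top _ _ _ _ _ hik (by omega)
      have h2 : vf α ε i (k+1) j = 0 := vf_top _ _ _ _ _ hik1 hjk
      rw [h1, h2]
      rcases le_or_gt j k with hjk' | hjk'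
      · have h0 : vf α ε i k j = 0 := vf_top _ _ _ _ _ hik hjk'
        rw [h0]; simp
      · have hj1 : j = k + 1 := by omega
        have h3 : j ≠ i := by omega
        rw [if_neg h3]; simp
    · -- j ≥ k+2
      obtain ⟨m, rfl⟩ : ∃ m, j = k + m + 2 := ⟨j - k - 2, by omega⟩
      have h3 : k + m + 2 ≠ i := by omega
      have hv1 : vf α ε i k (k+m+2) = -(piProd α (k+m+2)) * (-1/ε)^(m+2) := by
        rw [vf, if_pos hik, if_neg (by omega), show k+m+2-k = m+2 by omega]
      have hv2 : vf α ε i k (k+m+2-1) = -(piProd α (k+m+1)) * (-1/ε)^(m+1) := by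
        rw [show k+m+2-1 = k+m+1 by omega, vf, if_pos hik, if_neg (by omega),
          show k+m+1-k = m+1 by omega]
      have hv3 : vf α ε i (k+1) (k+m+2) = -(piProd α (k+m+2)) * (-1/ε)^(m+1) := by
        rw [vf, if_pos hik1, if_neg (by omega), show k+m+2-(k+1) = m+1 by omega]
      rw [if_neg h3, if_pos (by omega : 2 ≤ k+m+2), hv1, hv2, hv3,
        show piProd α (k+m+2) = piProd α (k+m+1) * α (k+m+2) from piProd_succ α (k+m+1),
        pow_succ]
      ring
  · -- case B : i > k
    have hb : ¬ i ≤ k := by omega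
    rcases eq_or_lt_of_le (by omega : k + 1 ≤ i) with hik1 | hik1
    · -- B1 : i = k+1, so i ≤ k+1
      have hle : i ≤ k + 1 := by omega
      rcases lt_trichotomy j k with hjk | hjk | hjk
      · -- j < k
        have h0 : vf α ε i k j = 0 := by
          rw [vf, if_neg hb, if_neg (by omega), if_pos (by omega)]
        have h1 : vf α ε i k (j-1) = 0 := by
          rw [vf, if_neg hb, if_neg (by omega), if_pos (by omega)]
        have h2 : vf α ε i (k+1) j = 0 := vf_top _ _ _ _ _ hle (by omega)
        rw [h0, h1, h2]; simp
      · -- j = k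
        have h0 : vf α ε i k j = piProd α k := by rw [vf, if_neg hb, if_pos hjk]
        have h1 : vf α ε i k (j-1) = 0 := by
          rw [vf, if_neg hb, if_neg (by omega), if_pos (by omega)]
        have h2 : vf α ε i (k+1) j = 0 := vf_top _ _ _ _ _ hle (by omega)
        rw [h0, h1, h2, if_neg (by omega : j ≠ i)]; simp
      · rcases eq_or_lt_of_le (by omega : k + 1 ≤ j) with hjk1 | hjk1
        · -- j = k+1 = i
          have hji : j = i := by omega
          have h0 : vf α ε i k j = -(piProd α j) * (-1/ε)^1 := by
            rw [vf, if_neg hb, if_neg (by omega), if_neg (by omega),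
              show j - k = 1 by omega]
          have h1 : vf α ε i k (j-1) = piProd α k := by
            rw [vf, if_neg hb, if_pos (by omega : j - 1 = k)]
          have h2 : vf α ε i (k+1) j = 0 := vf_top _ _ _ _ _ hle (by omega)
          rw [h0, h1, h2, if_pos hji, if_pos (by omega : 2 ≤ j),
            show piProd α j = piProd α k * α j from by
              rw [show j = k + 1 by omega]; exact piProd_succ α k,
            show j = k + 1 by omega]
          rw [pow_one]
          field_simp
          ring
        · -- j ≥ k+2 > i = k+1
          obtain ⟨m, rfl⟩ : ∃ m, j = k + m + 2 := ⟨j - k - 2, by omega⟩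
          have h0 : vf α ε i k (k+m+2) = -(piProd α (k+m+2)) * (-1/ε)^(m+2) := by
            rw [vf, if_neg hb, if_neg (by omega), if_neg (by omega),
              show k+m+2-k = m+2 by omega]
          have h1 : vf α ε i k (k+m+2-1) = -(piProd α (k+m+1)) * (-1/ε)^(m+1) := by
            rw [show k+m+2-1 = k+m+1 by omega, vf, if_neg hb, if_neg (by omega),
              if_neg (by omega), show k+m+1-k = m+1 by omega]
          have h2 : vf α ε i (k+1) (k+m+2) = -(piProd α (k+m+2)) * (-1/ε)^(m+1) := by
            rw [vf, if_pos hle, if_neg (by omega), show k+m+2-(k+1) = m+1 by omega]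
          rw [h0, h1, h2, if_neg (by omega : k+m+2 ≠ i), if_pos (by omega : 2 ≤ k+m+2),
            show piProd α (k+m+2) = piProd α (k+m+1) * α (k+m+2) from piProd_succ α (k+m+1),
            pow_succ]
          ring
    · -- B2 : i > k+1
      have hb1 : ¬ i ≤ k + 1 := by omega
      rcases lt_trichotomy j k with hjk | hjk | hjk
      · -- j < k
        have h0 : vf α ε i k j = 0 := by
          rw [vf, if_neg hb, if_neg (by omega), if_pos (by omega)]
        have h1 : vf α ε i k (j-1) = 0 := by
          rw [vf, if_neg hb, if_neg (by omega), if_pos (by omega)]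
        have h2 : vf α ε i (k+1) j = 0 := by
          rw [vf, if_neg hb1, if_neg (by omega), if_pos (by omega)]
        rw [h0, h1, h2]; simp
      · -- j = k
        have h0 : vf α ε i k j = piProd α k := by rw [vf, if_neg hb, if_pos hjk]
        have h1 : vf α ε i k (j-1) = 0 := by
          rw [vf, if_neg hb, if_neg (by omega), if_pos (by omega)]
        have h2 : vf α ε i (k+1) j = 0 := by
          rw [vf, if_neg hb1, if_neg (by omega), if_pos (by omega)]
        rw [h0, h1, h2, if_neg (by omega : j ≠ i)]; simp
      · rcases eq_or_lt_of_le (by omega : k + 1 ≤ j) with hjk1 | hjk1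
        · -- j = k+1 < i
          have h0 : vf α ε i k j = 0 := by
            rw [vf, if_neg hb, if_neg (by omega), if_pos (by omega)]
          have h1 : vf α ε i k (j-1) = piProd α k := by
            rw [vf, if_neg hb, if_pos (by omega : j - 1 = k)]
          have h2 : vf α ε i (k+1) j = piProd α (k+1) := by
            rw [vf, if_neg hb1, if_pos (by omega : j = k+1)]
          rw [h0, h1, h2, if_neg (by omega : j ≠ i), if_pos (by omega : 2 ≤ j),
            show j = k + 1 by omega, piProd_succ]
          ring
        · rcases lt_trichotomy j i with hji | hji | hji
          · -- k+1 < j < i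
            have h0 : vf α ε i k j = 0 := by
              rw [vf, if_neg hb, if_neg (by omega), if_pos (by omega)]
            have h1 : vf α ε i k (j-1) = 0 := by
              rw [vf, if_neg hb, if_neg (by omega), if_pos (by omega)]
            have h2 : vf α ε i (k+1) j = 0 := by
              rw [vf, if_neg hb1, if_neg (by omega), if_pos (by omega)]
            rw [h0, h1, h2]; simp
          · -- j = i, with i ≥ k+2
            obtain ⟨m, rfl⟩ : ∃ m, j = k + m + 2 := ⟨j - k - 2, by omega⟩
            have h0 : vf α ε i k (k+m+2) = -(piProd α (k+m+2)) * (-1/ε)^(m+2) := by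
              rw [vf, if_neg hb, if_neg (by omega), if_neg (by omega),
                show k+m+2-k = m+2 by omega]
            have h1 : vf α ε i k (k+m+2-1) = 0 := by
              rw [show k+m+2-1 = k+m+1 by omega, vf, if_neg hb, if_neg (by omega),
                if_pos (by omega)]
            have h2 : vf α ε i (k+1) (k+m+2) = -(piProd α (k+m+2)) * (-1/ε)^(m+1) := by
              rw [vf, if_neg hb1, if_neg (by omega), if_neg (by omega),
                show k+m+2-(k+1) = m+1 by omega]
            rw [h0, h1, h2, if_pos hji, if_pos (by omega : 2 ≤ k+m+2), pow_succ]
            field_simp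
            ring
          · -- j > i ≥ k+2, so j ≥ k+3
            obtain ⟨m, rfl⟩ : ∃ m, j = k + m + 3 := ⟨j - k - 3, by omega⟩
            have h0 : vf α ε i k (k+m+3) = -(piProd α (k+m+3)) * (-1/ε)^(m+3) := by
              rw [vf, if_neg hb, if_neg (by omega), if_neg (by omega),
                show k+m+3-k = m+3 by omega]
            have h1 : vf α ε i k (k+m+3-1) = -(piProd α (k+m+2)) * (-1/ε)^(m+2) := by
              rw [show k+m+3-1 = k+m+2 by omega, vf, if_neg hb, if_neg (by omega),
                if_neg (by omega), show k+m+2-k = m+2 by omega]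
            have h2 : vf α ε i (k+1) (k+m+3) = -(piProd α (k+m+3)) * (-1/ε)^(m+2) := by
              rw [vf, if_neg hb1, if_neg (by omega), if_neg (by omega),
                show k+m+3-(k+1) = m+2 by omega]
            rw [h0, h1, h2, if_neg (by omega : k+m+3 ≠ i), if_pos (by omega : 2 ≤ k+m+3),
              show piProd α (k+m+3) = piProd α (k+m+2) * α (k+m+3) from piProd_succ α (k+m+2),
              pow_succ]
            ring

/-- `H_i Q_i = Q_i J`; the Jordan normal form `J` of `H_i` is independent of
the position `i` of the perturbation. -/
theorem perturbed_cascade_jordan_form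
    (n : ℕ) (hn : 1 ≤ n) (α : ℕ → ℝ) (β ε : ℝ) (hε : ε ≠ 0)
    (i : ℕ) (hi : 1 ≤ i) (hin : i ≤ n) :
    perturbedCascadeMatrix n α β ε i * Qmat n α ε i = Qmat n α ε i * Jmat n β ε := by
  ext r c
  rw [Matrix.mul_apply, Matrix.mul_apply]
  have hrlt : r.val - 1 < n := lt_of_le_of_lt (Nat.sub_le _ _) r.isLt
  have hclt : c.val - 1 < n := lt_of_le_of_lt (Nat.sub_le _ _) c.isLt
  have hL : ∑ x, perturbedCascadeMatrix n α β ε i r x * Qmat n α ε i x c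
      = (if r.val + 1 = i then -(β+ε) else -β) * Qmat n α ε i r c
        + (if 1 ≤ r.val then α (r.val+1) * Qmat n α ε i ⟨r.val-1, hrlt⟩ c else 0) := by
    have step : ∀ x : Fin n, perturbedCascadeMatrix n α β ε i r x * Qmat n α ε i x c
        = (if x = r then (if r.val + 1 = i then -(β+ε) else -β) * Qmat n α ε i r c else 0)
          + (if r.val = x.val + 1 then α (r.val+1) * Qmat n α ε i x c else 0) := by
      intro x
      by_cases h : x = r
      · subst h
        have hne : ¬ (x.val = x.val + 1) := by omega
        simp [perturbedCascadeMatrix, hne]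
      · have hrx : ¬ r = x := fun hh => h hh.symm
        by_cases h2 : r.val = x.val + 1
        · simp [perturbedCascadeMatrix, h, hrx, h2]
        · simp [perturbedCascadeMatrix, h, hrx, h2]
    rw [Finset.sum_congr rfl (fun x _ => step x), Finset.sum_add_distrib]
    congr 1
    · rw [Finset.sum_ite_eq' Finset.univ r
        (fun _ => (if r.val + 1 = i then -(β+ε) else -β) * Qmat n α ε i r c)]
      simp
    · by_cases hr : 1 ≤ r.val
      · rw [if_pos hr]
        have hcond : ∀ x : Fin n,
            (r.val = x.val + 1) ↔ (x = (⟨r.val-1, hrlt⟩ : Fin n)) := by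
          intro x
          constructor
          · intro h; exact Fin.ext (show x.val = r.val - 1 by omega)
          · intro h; subst h; show r.val = r.val - 1 + 1; omega
        simp only [hcond]
        rw [Finset.sum_ite_eq' Finset.univ (⟨r.val-1, hrlt⟩ : Fin n)
          (fun x => α (r.val+1) * Qmat n α ε i x c)]
        simp
      · rw [if_neg hr]
        apply Finset.sum_eq_zero
        intro x _
        rw [if_neg (by omega)]
  have hR : ∑ x, Qmat n α ε i r x * Jmat n β ε x c
      = Qmat n α ε i r c * (if c.val = 0 then -(β+ε) else -β)
        + (if 2 ≤ c.val then Qmat n α ε i r ⟨c.val-1, hclt⟩ else 0) := by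
    have step : ∀ x : Fin n, Qmat n α ε i r x * Jmat n β ε x c
        = (if x = c then Qmat n α ε i r c * (if c.val = 0 then -(β+ε) else -β) else 0)
          + (if 2 ≤ c.val ∧ x = (⟨c.val-1, hclt⟩ : Fin n) then Qmat n α ε i r x else 0) := by
      intro x
      by_cases h : x = c
      · subst h
        have hfalse : ¬ (2 ≤ x.val ∧ x = (⟨x.val - 1, hclt⟩ : Fin n)) := by
          rintro ⟨h1, h2⟩
          have h3 : x.val = x.val - 1 := congrArg Fin.val h2
          omega
        simp [Jmat, hfalse]
      · by_cases h2 : (1 ≤ x.val ∧ c.val = x.val + 1)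
        · obtain ⟨h21, h22⟩ := h2
          simp only [Jmat, if_neg h]
          rw [if_pos (show 1 ≤ x.val ∧ c.val = x.val + 1 from ⟨h21, h22⟩),
            if_pos (show 2 ≤ c.val ∧ x = (⟨c.val - 1, hclt⟩ : Fin n) from
              ⟨by omega, Fin.ext (show x.val = c.val - 1 by omega)⟩),
            mul_one, zero_add]
        · have hneg : ¬ (2 ≤ c.val ∧ x = (⟨c.val - 1, hclt⟩ : Fin n)) := by
            rintro ⟨hh1, hh2⟩
            have h3 : x.val = c.val - 1 := congrArg Fin.val hh2
            exact h2 ⟨by omega, by omega⟩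
          simp [Jmat, h, h2, hneg]
    rw [Finset.sum_congr rfl (fun x _ => step x), Finset.sum_add_distrib]
    congr 1
    · rw [Finset.sum_ite_eq' Finset.univ c
        (fun _ => Qmat n α ε i r c * (if c.val = 0 then -(β+ε) else -β))]
      simp
    · by_cases hc2 : 2 ≤ c.val
      · rw [if_pos hc2]
        simp only [hc2, true_and]
        rw [Finset.sum_ite_eq' Finset.univ (⟨c.val-1, hclt⟩ : Fin n)
          (fun x => Qmat n α ε i r x)]
        simp
      · rw [if_neg hc2]
        apply Finset.sum_eq_zero
        intro x _
        rw [if_neg (by rintro ⟨hh, _⟩; exact hc2 hh)]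
  rw [hL, hR]
  rcases Nat.eq_zero_or_pos c.val with hc | hc
  · -- first column
    have hQ0 : ∀ x : Fin n, Qmat n α ε i x c = q1f α ε i (x.val+1) := by
      intro x
      simp only [Qmat, if_pos hc, qOne, q1f, Nat.add_sub_cancel]
    rw [hQ0 r, hQ0 ⟨r.val-1, hrlt⟩, if_pos hc, if_neg (by omega : ¬ 2 ≤ c.val), add_zero]
    have hcol := col0 α β ε hε i hi (r.val+1) (by omega)
    rw [Nat.add_sub_cancel] at hcol
    by_cases hr : 1 ≤ r.val
    · rw [if_pos hr, show (⟨r.val-1, hrlt⟩ : Fin n).val = r.val - 1 from rfl,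
        show r.val - 1 + 1 = r.val from by omega]
      rw [if_pos (by omega : 2 ≤ r.val + 1)] at hcol
      linarith [hcol]
    · rw [if_neg hr]
      rw [if_neg (by omega : ¬ 2 ≤ r.val + 1)] at hcol
      linarith [hcol]
  · -- later columns
    have hcn : c.val + 1 ≤ n := c.isLt
    have hQc : ∀ x : Fin n, Qmat n α ε i x c = vf α ε i (n - c.val) (x.val+1) := by
      intro x
      simp only [Qmat, if_neg (by omega : ¬ c.val = 0)]
      rw [show n - (c.val + 1) + 1 = n - c.val from by omega]
      rfl
    have hcoup : (if 2 ≤ c.val then Qmat n α ε i r ⟨c.val-1, hclt⟩ else 0)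
        = vf α ε i (n - c.val + 1) (r.val+1) := by
      by_cases h2 : 2 ≤ c.val
      · rw [if_pos h2]
        simp only [Qmat, show ((⟨c.val-1, hclt⟩ : Fin n) : ℕ) = c.val - 1 from rfl,
          if_neg (by omega : ¬ c.val - 1 = 0)]
        rw [show n - ((c.val - 1) + 1) + 1 = n - c.val + 1 from by omega]
        rfl
      · rw [if_neg h2]
        rw [show n - c.val + 1 = n from by omega]
        exact (vf_top α ε i n (r.val+1) hin (by omega)).symm
    rw [hQc r, hQc ⟨r.val-1, hrlt⟩, hcoup, if_neg (by omega : ¬ c.val = 0)]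
    have hcol := colv α β ε hε i hi (n - c.val) (r.val+1) (by omega) (by omega)
    rw [Nat.add_sub_cancel] at hcol
    by_cases hr : 1 ≤ r.val
    · rw [if_pos hr, show (⟨r.val-1, hrlt⟩ : Fin n).val = r.val - 1 from rfl,
        show r.val - 1 + 1 = r.val from by omega]
      rw [if_pos (by omega : 2 ≤ r.val + 1)] at hcol
      linarith [hcol]
    · rw [if_neg hr]
      rw [if_neg (by omega : ¬ 2 ≤ r.val + 1)] at hcol
      linarith [hcol]
end

section
/- Let n ≥ 1 be an integer, let α_1,…,α_n, β, ε be real numbers with ε ≠ 0, let 1 ≤ i ≤ n, and let H_i be the ε-perturbed cascade rate matrix. Define the vector q ∈ ℝ^n by q(j) = 0 for j < i and q(j) = π_j (−1/ε)^{j−1} for j ≥ i, where π_j = ∏_{l=1}^j α_l. Then H_i q = −(β+ε) q; that is, q is an eigenvector of H_i associated with the eigenvalue −(β+ε). -/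
open Matrix

/-- `q₁` is an eigenvector of `H_i` associated with the eigenvalue `-(β+ε)`. -/
theorem perturbed_cascade_eigenvector
    (n : ℕ) (hn : 1 ≤ n) (α : ℕ → ℝ) (β ε : ℝ) (hε : ε ≠ 0)
    (i : ℕ) (hi : 1 ≤ i) (hin : i ≤ n) :
    perturbedCascadeMatrix n α β ε i *ᵥ qOne n α ε i = (-(β + ε)) • qOne n α ε i := by
  ext r
  have hsum : ∀ c : Fin n, perturbedCascadeMatrix n α β ε i r c * qOne n α ε i c =
      (if c = r then (if r.val + 1 = i then -(β+ε) else -β) * qOne n α ε i r else 0)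
      + (if c.val + 1 = r.val then α (r.val + 1) * qOne n α ε i c else 0) := by
    intro c
    simp only [perturbedCascadeMatrix]
    by_cases h1 : r = c
    · subst h1; simp
    · have h1' : ¬ c = r := fun h => h1 h.symm
      by_cases h2 : r.val = c.val + 1
      · rw [if_neg h1, if_pos h2, if_neg h1', if_pos h2.symm, zero_add]
      · have h2' : ¬ c.val + 1 = r.val := fun h => h2 h.symm
        simp [h1, h1', h2, h2']
  simp only [Matrix.mulVec, dotProduct, Pi.smul_apply, smul_eq_mul]
  rw [Finset.sum_congr rfl (fun c _ => hsum c), Finset.sum_add_distrib,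
      Finset.sum_ite_eq' Finset.univ r]
  simp only [Finset.mem_univ, if_true]
  rcases Nat.eq_zero_or_eq_succ_pred r.val with h0 | h0
  · -- r.val = 0 : second sum vanishes
    have hz : ∀ c : Fin n, (if c.val + 1 = r.val then α (r.val + 1) * qOne n α ε i c else 0) = 0 := by
      intro c; rw [h0]; simp
    rw [Finset.sum_congr rfl (fun c _ => hz c), Finset.sum_const_zero, add_zero]
    -- r.val = 0 and i ≥ 1 : either i = 1 (diagonal matches) or i > 1 (q r = 0)
    by_cases hi1 : r.val + 1 = i
    · simp [hi1]
    · have hlt : r.val + 1 < i := by omega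
      simp [qOne, hlt]
  · -- r.val = m + 1
    set m := r.val - 1 with hm
    have hmn : m < n := lt_trans (by omega) r.isLt
    have hsum2 : (∑ c : Fin n, if c.val + 1 = r.val then α (r.val + 1) * qOne n α ε i c else 0)
        = α (r.val + 1) * qOne n α ε i ⟨m, hmn⟩ := by
      rw [Finset.sum_eq_single (⟨m, hmn⟩ : Fin n)]
      · have hc : (⟨m, hmn⟩ : Fin n).val + 1 = r.val := by simp; omega
        rw [if_pos hc]
      · intro c _ hc
        have : ¬ c.val + 1 = r.val := by
          intro h; apply hc; apply Fin.ext; simp; omega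
        simp [this]
      · simp
    rw [hsum2]
    by_cases hi1 : r.val + 1 = i
    · -- diagonal = -(β+ε), and q at m is 0 since m + 1 < i
      have : (⟨m, hmn⟩ : Fin n).val + 1 < i := by simp; omega
      simp [hi1, qOne, this]
    · by_cases hlt : r.val + 1 < i
      · -- everything below i: q r = 0 and q m = 0
        have h1 : (⟨m, hmn⟩ : Fin n).val + 1 < i := by simp; omega
        simp [qOne, hlt, h1]
      · -- r.val + 1 > i: recurrence
        have hge : i ≤ r.val := by omega
        have h1 : ¬ (⟨m, hmn⟩ : Fin n).val + 1 < i := by simp; omega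
        have h2 : ¬ r.val + 1 < i := hlt
        simp only [qOne, if_neg h1, if_neg h2, if_neg hi1]
        have hpi : piProd α (r.val + 1) = piProd α (m + 1) * α (r.val + 1) := by
          have : m + 1 = r.val := by omega
          rw [this, piProd, piProd, ← Finset.prod_Icc_succ_top (by omega : 1 ≤ r.val + 1)]
        have hpow : (-1 / ε) ^ r.val = (-1 / ε) ^ m * (-1 / ε) := by
          have hr : r.val = m + 1 := by omega
          rw [hr, pow_succ]
        rw [hpi, hpow]
        field_simp
end

section
/- Let n ≥ 1 be an integer, let α_1,…,α_n, β, ε be real numbers with ε ≠ 0 and α_l ≠ 0 for every l, let 1 ≤ i ≤ n, and let Q_i be the generalised-eigenvector matrix. Define the n×n matrix M by: M(1,j) = (−ε)^{j−1}/π_j for j ≤ i and M(1,j) = 0 for j > i; and for each 2 ≤ k ≤ n, M(k,j) = 1/π_j if j = n−k+1, M(k,j) = ε/π_j if j = n−k+2 and n−i+1 ≥ k, and M(k,j) = 0 otherwise. Then M Q_i = I; that is, Q_i is invertible with Q_i⁻¹ = M. -/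
open Matrix

/-- The candidate inverse `M` of `Q_i` (1-based row `k`, column `j`):
`M(1,j) = (-ε)^{j-1}/πⱼ` for `j ≤ i` and `0` for `j > i`; for `2 ≤ k ≤ n`,
`M(k,j) = 1/πⱼ` if `j = n-k+1`, `M(k,j) = ε/πⱼ` if `j = n-k+2` and `n-i+1 ≥ k`,
and `M(k,j) = 0` otherwise. -/
noncomputable def Mmat (n : ℕ) (α : ℕ → ℝ) (ε : ℝ) (i : ℕ) : Matrix (Fin n) (Fin n) ℝ :=
  fun r c =>
    let k := r.val + 1
    let j := c.val + 1
    if k = 1 then (if j ≤ i then (-ε) ^ (j - 1) / piProd α j else 0)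
    else if j = n - k + 1 then 1 / piProd α j
    else if j = n - k + 2 ∧ n - i + 1 ≥ k then ε / piProd α j
    else 0

section Helpers

variable (n : ℕ) (α : ℕ → ℝ) (ε : ℝ) (i : ℕ)

private lemma Qmat_col0 (t c : Fin n) (hc : (c : ℕ) = 0) :
    Qmat n α ε i t c = qOne n α ε i t := by
  simp only [Qmat]; rw [if_pos hc]

private lemma Qmat_colk (t c : Fin n) (hc : (c : ℕ) ≠ 0) :
    Qmat n α ε i t c = genEigVec n α ε i (n - (c : ℕ)) t := by
  have := c.isLt
  simp only [Qmat]
  rw [if_neg hc, show n - ((c : ℕ) + 1) + 1 = n - (c : ℕ) from by omega]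

private lemma qOne_lt (t : Fin n) (h : (t : ℕ) + 1 < i) : qOne n α ε i t = 0 := by
  simp only [qOne]; rw [if_pos h]

private lemma qOne_ge (t : Fin n) (h : ¬ ((t : ℕ) + 1 < i)) :
    qOne n α ε i t = piProd α ((t : ℕ) + 1) * (-1 / ε) ^ (t : ℕ) := by
  simp only [qOne]; rw [if_neg h]

private lemma gev1 (k : ℕ) (t : Fin n) (hik : i ≤ k) (h : (t : ℕ) + 1 ≤ k) :
    genEigVec n α ε i k t = 0 := by
  simp only [genEigVec]; rw [if_pos hik, if_pos h]

private lemma gev2 (k : ℕ) (t : Fin n) (hik : i ≤ k) (h : ¬ ((t : ℕ) + 1 ≤ k)) :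
    genEigVec n α ε i k t
      = -(piProd α ((t : ℕ) + 1)) * (-1 / ε) ^ ((t : ℕ) + 1 - k) := by
  simp only [genEigVec]; rw [if_pos hik, if_neg h]

private lemma gev3 (k : ℕ) (t : Fin n) (hik : ¬ i ≤ k) (h : (t : ℕ) + 1 = k) :
    genEigVec n α ε i k t = piProd α k := by
  simp only [genEigVec]; rw [if_neg hik, if_pos h]

private lemma gev4 (k : ℕ) (t : Fin n) (hik : ¬ i ≤ k) (h1 : (t : ℕ) + 1 ≠ k)
    (h2 : (t : ℕ) + 1 < i) : genEigVec n α ε i k t = 0 := by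
  simp only [genEigVec]; rw [if_neg hik, if_neg h1, if_pos h2]

private lemma gev5 (k : ℕ) (t : Fin n) (hik : ¬ i ≤ k) (h : i ≤ (t : ℕ) + 1) :
    genEigVec n α ε i k t
      = -(piProd α ((t : ℕ) + 1)) * (-1 / ε) ^ ((t : ℕ) + 1 - k) := by
  have h1 : (t : ℕ) + 1 ≠ k := by omega
  have h2 : ¬ ((t : ℕ) + 1 < i) := by omega
  simp only [genEigVec]; rw [if_neg hik, if_neg h1, if_neg h2]

private lemma m0a (r t : Fin n) (hr : (r : ℕ) = 0) (h : (t : ℕ) + 1 ≤ i) :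
    Mmat n α ε i r t = (-ε) ^ (t : ℕ) / piProd α ((t : ℕ) + 1) := by
  simp only [Mmat]
  rw [if_pos (by omega), if_pos h, Nat.add_sub_cancel]

private lemma m0b (r t : Fin n) (hr : (r : ℕ) = 0) (h : ¬ ((t : ℕ) + 1 ≤ i)) :
    Mmat n α ε i r t = 0 := by
  simp only [Mmat]
  rw [if_pos (by omega), if_neg h]

private lemma m1a (r t : Fin n) (hr : (r : ℕ) ≠ 0) (h : (t : ℕ) + 1 = n - (r : ℕ)) :
    Mmat n α ε i r t = 1 / piProd α ((t : ℕ) + 1) := by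
  have := r.isLt
  simp only [Mmat]
  rw [if_neg (by omega), if_pos (by omega)]

private lemma m1b (r t : Fin n) (hr : (r : ℕ) ≠ 0) (h : (t : ℕ) + 1 = n - (r : ℕ) + 1)
    (hg : (r : ℕ) ≤ n - i) :
    Mmat n α ε i r t = ε / piProd α ((t : ℕ) + 1) := by
  have := r.isLt
  simp only [Mmat]
  rw [if_neg (by omega), if_neg (by omega), if_pos (by constructor <;> omega)]

private lemma m1c (r t : Fin n) (hr : (r : ℕ) ≠ 0) (h : (t : ℕ) + 1 = n - (r : ℕ) + 1)
    (hg : ¬ ((r : ℕ) ≤ n - i)) :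
    Mmat n α ε i r t = 0 := by
  have := r.isLt
  simp only [Mmat]
  rw [if_neg (by omega), if_neg (by omega), if_neg (by rintro ⟨-, hh⟩; omega)]

private lemma m1d (r t : Fin n) (hr : (r : ℕ) ≠ 0) (h1 : (t : ℕ) + 1 ≠ n - (r : ℕ))
    (h2 : (t : ℕ) + 1 ≠ n - (r : ℕ) + 1) :
    Mmat n α ε i r t = 0 := by
  have := r.isLt
  simp only [Mmat]
  rw [if_neg (by omega), if_neg (by omega), if_neg (by rintro ⟨hh, -⟩; omega)]

end Helpers

/-- `M Q_i = I`, i.e. `Q_i` is invertible with inverse `M`. -/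
theorem perturbed_cascade_Q_inverse
    (n : ℕ) (hn : 1 ≤ n) (α : ℕ → ℝ) (β ε : ℝ) (hε : ε ≠ 0)
    (hα : ∀ l, 1 ≤ l → l ≤ n → α l ≠ 0)
    (i : ℕ) (hi : 1 ≤ i) (hin : i ≤ n) :
    Mmat n α ε i * Qmat n α ε i = 1 := by
  have hpi : ∀ j : ℕ, 1 ≤ j → j ≤ n → piProd α j ≠ 0 := by
    intro j h1 h2
    unfold piProd
    rw [Finset.prod_ne_zero_iff]
    intro l hl
    rw [Finset.mem_Icc] at hl
    exact hα l hl.1 (hl.2.trans h2)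
  have hcan : ∀ m : ℕ, (-ε) ^ m * (-1 / ε) ^ m = 1 := by
    intro m
    rw [← mul_pow]
    have h : -ε * (-1 / ε) = 1 := by field_simp
    rw [h, one_pow]
  -- cancellation of eigenvector-type pairs
  have key1 : ∀ (m : ℕ) (P P' : ℝ), P ≠ 0 → P' ≠ 0 →
      1 / P * (P * (-1 / ε) ^ m) + ε / P' * (P' * (-1 / ε) ^ (m + 1)) = 0 := by
    intro m P P' hP hP'
    have hh : 1 / P * (P * (-1 / ε) ^ m) + ε / P' * (P' * ((-1 / ε) ^ m * (-1 / ε)))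
        = (P / P) * (-1 / ε) ^ m + (P' / P') * ((-1 / ε) ^ m * (ε * (-1 / ε))) := by ring
    rw [pow_succ, hh, div_self hP, div_self hP',
      show ε * (-1 / ε) = -1 from by field_simp]
    ring
  have key2 : ∀ (m : ℕ) (P P' : ℝ), P ≠ 0 → P' ≠ 0 →
      1 / P * (-P * (-1 / ε) ^ m) + ε / P' * (-P' * (-1 / ε) ^ (m + 1)) = 0 := by
    intro m P P' hP hP'
    have hh : 1 / P * (-P * (-1 / ε) ^ m) + ε / P' * (-P' * ((-1 / ε) ^ m * (-1 / ε)))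
        = -((P / P) * (-1 / ε) ^ m) - (P' / P') * ((-1 / ε) ^ m * (ε * (-1 / ε))) := by ring
    rw [pow_succ, hh, div_self hP, div_self hP',
      show ε * (-1 / ε) = -1 from by field_simp]
    ring
  ext r c
  rw [Matrix.mul_apply, Matrix.one_apply]
  have hrn := r.isLt
  have hcn := c.isLt
  by_cases hr : (r : ℕ) = 0
  · by_cases hc : (c : ℕ) = 0
    · -- (A) top-left diagonal entry
      have hrc : r = c := Fin.ext (by omega)
      rw [if_pos hrc]
      rw [Finset.sum_eq_single (⟨i - 1, by omega⟩ : Fin n)]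
      · rw [m0a n α ε i r _ hr (show i - 1 + 1 ≤ i from by omega),
          Qmat_col0 n α ε i _ c hc,
          qOne_ge n α ε i _ (show ¬ (i - 1 + 1 < i) from by omega)]
        have hp := hpi i hi hin
        have hh : (-ε) ^ (i - 1) / piProd α (i - 1 + 1) *
            (piProd α (i - 1 + 1) * (-1 / ε) ^ (i - 1))
            = ((-ε) ^ (i - 1) * (-1 / ε) ^ (i - 1)) *
              (piProd α (i - 1 + 1) / piProd α (i - 1 + 1)) := by ring
        rw [hh, hcan, div_self (by rw [show i - 1 + 1 = i from by omega]; exact hp),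
          mul_one]
      · intro t _ htne
        have htv : (t : ℕ) ≠ i - 1 := fun hh => htne (Fin.ext hh)
        have htn := t.isLt
        rcases le_or_gt ((t : ℕ) + 1) i with h | h
        · rw [Qmat_col0 n α ε i t c hc, qOne_lt n α ε i t (by omega), mul_zero]
        · rw [m0b n α ε i r t hr (by omega), zero_mul]
      · intro h; exact absurd (Finset.mem_univ _) h
    · -- (B) first row, column ≥ 2
      have hne : ¬ r = c := by rw [Fin.ext_iff]; omega
      rw [if_neg hne]
      by_cases hik : i ≤ n - (c : ℕ)
      · rw [Finset.sum_eq_zero]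
        intro t _
        have htn := t.isLt
        rcases le_or_gt ((t : ℕ) + 1) i with h | h
        · rw [Qmat_colk n α ε i t c hc, gev1 n α ε i _ t hik (by omega), mul_zero]
        · rw [m0b n α ε i r t hr (by omega), zero_mul]
      · -- pair {n-c-1, i-1}
        have hzero : ∀ t ∈ Finset.univ,
            t ∉ ({(⟨n - (c : ℕ) - 1, by omega⟩ : Fin n), (⟨i - 1, by omega⟩ : Fin n)} :
              Finset (Fin n)) →
            Mmat n α ε i r t * Qmat n α ε i t c = 0 := by
          intro t _ ht
          rw [Finset.mem_insert, Finset.mem_singleton] at ht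
          push_neg at ht
          have ht1 : (t : ℕ) ≠ n - (c : ℕ) - 1 := fun hh => ht.1 (Fin.ext hh)
          have ht2 : (t : ℕ) ≠ i - 1 := fun hh => ht.2 (Fin.ext hh)
          have htn := t.isLt
          rcases le_or_gt ((t : ℕ) + 1) i with h | h
          · rw [Qmat_colk n α ε i t c hc,
              gev4 n α ε i _ t hik (by omega) (by omega), mul_zero]
          · rw [m0b n α ε i r t hr (by omega), zero_mul]
        rw [← Finset.sum_subset (Finset.subset_univ _) hzero,
          Finset.sum_pair (by simp only [ne_eq, Fin.mk.injEq]; omega)]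
        rw [m0a n α ε i r _ hr (show n - (c : ℕ) - 1 + 1 ≤ i from by omega),
          m0a n α ε i r _ hr (show i - 1 + 1 ≤ i from by omega),
          Qmat_colk n α ε i _ c hc, Qmat_colk n α ε i _ c hc,
          gev3 n α ε i _ _ hik (show n - (c : ℕ) - 1 + 1 = n - (c : ℕ) from by omega),
          gev5 n α ε i _ _ hik (show i ≤ i - 1 + 1 from by omega)]
        try simp only [Fin.val_mk]
        rw [show n - (c : ℕ) - 1 + 1 = n - (c : ℕ) from by omega,
          show i - 1 + 1 = i from by omega]
        obtain ⟨m, hm⟩ : ∃ m, m = i - (n - (c : ℕ)) := ⟨_, rfl⟩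
        rw [← hm, show i - 1 = (n - (c : ℕ) - 1) + m from by omega, pow_add]
        have hpK := hpi (n - (c : ℕ)) (by omega) (by omega)
        have hpI := hpi i hi hin
        have hstep : (-ε) ^ (n - (c : ℕ) - 1) / piProd α (n - (c : ℕ)) *
              piProd α (n - (c : ℕ)) +
            (-ε) ^ (n - (c : ℕ) - 1) * (-ε) ^ m / piProd α i *
              (-(piProd α i) * (-1 / ε) ^ m)
            = (-ε) ^ (n - (c : ℕ) - 1) * (piProd α (n - (c : ℕ)) / piProd α (n - (c : ℕ)))
              - (-ε) ^ (n - (c : ℕ) - 1) * ((-ε) ^ m * (-1 / ε) ^ m) *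
                (piProd α i / piProd α i) := by ring
        rw [hstep, div_self hpK, div_self hpI, hcan]
        ring
  · -- rows 2..n : support {n-r-1, n-r}
    have hzero : ∀ t ∈ Finset.univ,
        t ∉ ({(⟨n - (r : ℕ) - 1, by omega⟩ : Fin n), (⟨n - (r : ℕ), by omega⟩ : Fin n)} :
          Finset (Fin n)) →
        Mmat n α ε i r t * Qmat n α ε i t c = 0 := by
      intro t _ ht
      rw [Finset.mem_insert, Finset.mem_singleton] at ht
      push_neg at ht
      have ht1 : (t : ℕ) ≠ n - (r : ℕ) - 1 := fun hh => ht.1 (Fin.ext hh)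
      have ht2 : (t : ℕ) ≠ n - (r : ℕ) := fun hh => ht.2 (Fin.ext hh)
      have htn := t.isLt
      rw [m1d n α ε i r t hr (by omega) (by omega), zero_mul]
    rw [← Finset.sum_subset (Finset.subset_univ _) hzero,
      Finset.sum_pair (by simp only [ne_eq, Fin.mk.injEq]; omega)]
    rw [m1a n α ε i r _ hr (show n - (r : ℕ) - 1 + 1 = n - (r : ℕ) from by omega)]
    try simp only [Fin.val_mk]
    by_cases hc : (c : ℕ) = 0
    · -- column 1
      have hne : ¬ r = c := by rw [Fin.ext_iff]; omega
      rw [if_neg hne, Qmat_col0 n α ε i _ c hc, Qmat_col0 n α ε i _ c hc]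
      by_cases h1 : i ≤ n - (r : ℕ)
      · rw [m1b n α ε i r _ hr rfl (by omega),
          qOne_ge n α ε i _ (show ¬ (n - (r : ℕ) - 1 + 1 < i) from by omega),
          qOne_ge n α ε i _ (show ¬ ((n - (r : ℕ) : ℕ) + 1 < i) from by omega)]
        try simp only [Fin.val_mk]
        rw [show n - (r : ℕ) - 1 + 1 = n - (r : ℕ) from by omega]
        obtain ⟨m, hm⟩ : ∃ m, m = n - (r : ℕ) - 1 := ⟨_, rfl⟩
        rw [← hm, show n - (r : ℕ) = m + 1 from by omega]
        exact key1 m _ _ (hpi (m + 1) (by omega) (by omega))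
          (hpi (m + 1 + 1) (by omega) (by omega))
      · rw [m1c n α ε i r _ hr rfl (by omega), zero_mul,
          qOne_lt n α ε i _ (show n - (r : ℕ) - 1 + 1 < i from by omega), mul_zero,
          add_zero]
    · -- columns ≥ 2
      rw [Qmat_colk n α ε i _ c hc, Qmat_colk n α ε i _ c hc]
      by_cases hik : i ≤ n - (c : ℕ)
      · by_cases hd : n - (r : ℕ) = n - (c : ℕ)
        · -- diagonal
          have hrc : r = c := Fin.ext (by omega)
          rw [if_pos hrc,
            gev1 n α ε i _ _ hik (show n - (r : ℕ) - 1 + 1 ≤ n - (c : ℕ) from by omega),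
            mul_zero, zero_add,
            m1b n α ε i r _ hr rfl (by omega),
            gev2 n α ε i _ _ hik (show ¬ ((n - (r : ℕ) : ℕ) + 1 ≤ n - (c : ℕ)) from by omega)]
          try simp only [Fin.val_mk]
          rw [show (n - (r : ℕ) : ℕ) + 1 - (n - (c : ℕ)) = 1 from by omega, pow_one]
          have hp := hpi (n - (r : ℕ) + 1) (by omega) (by omega)
          have hh : ε / piProd α (n - (r : ℕ) + 1) *
              (-(piProd α (n - (r : ℕ) + 1)) * (-1 / ε))
              = (piProd α (n - (r : ℕ) + 1) / piProd α (n - (r : ℕ) + 1)) *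
                (ε * (1 / ε)) := by ring
          rw [hh, div_self hp, one_div, mul_inv_cancel₀ hε, mul_one]
        · have hne : ¬ r = c := by rw [Fin.ext_iff]; omega
          rw [if_neg hne]
          by_cases hgt : n - (c : ℕ) < n - (r : ℕ)
          · rw [m1b n α ε i r _ hr rfl (by omega),
              gev2 n α ε i _ _ hik (show ¬ (n - (r : ℕ) - 1 + 1 ≤ n - (c : ℕ)) from by omega),
              gev2 n α ε i _ _ hik (show ¬ ((n - (r : ℕ) : ℕ) + 1 ≤ n - (c : ℕ)) from by omega)]
            try simp only [Fin.val_mk]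
            rw [show n - (r : ℕ) - 1 + 1 = n - (r : ℕ) from by omega]
            obtain ⟨m, hm⟩ : ∃ m, m = n - (r : ℕ) - (n - (c : ℕ)) := ⟨_, rfl⟩
            rw [← hm, show (n - (r : ℕ) : ℕ) + 1 - (n - (c : ℕ)) = m + 1 from by omega]
            exact key2 m _ _ (hpi (n - (r : ℕ)) (by omega) (by omega))
              (hpi (n - (r : ℕ) + 1) (by omega) (by omega))
          · rw [gev1 n α ε i _ _ hik (show n - (r : ℕ) - 1 + 1 ≤ n - (c : ℕ) from by omega),
              gev1 n α ε i _ _ hik (show (n - (r : ℕ) : ℕ) + 1 ≤ n - (c : ℕ) from by omega),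
              mul_zero, mul_zero, add_zero]
      · -- i > n - c
        by_cases hd : n - (r : ℕ) = n - (c : ℕ)
        · have hrc : r = c := Fin.ext (by omega)
          rw [if_pos hrc,
            gev3 n α ε i _ _ hik (show n - (r : ℕ) - 1 + 1 = n - (c : ℕ) from by omega),
            m1c n α ε i r _ hr rfl (by omega), zero_mul, add_zero]
          try simp only [Fin.val_mk]
          rw [show n - (r : ℕ) - 1 + 1 = n - (c : ℕ) from by omega]
          rw [one_div, inv_mul_cancel₀ (hpi (n - (c : ℕ)) (by omega) (by omega))]
        · have hne : ¬ r = c := by rw [Fin.ext_iff]; omega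
          rw [if_neg hne]
          by_cases hj1i : i ≤ n - (r : ℕ)
          · rw [m1b n α ε i r _ hr rfl (by omega),
              gev5 n α ε i _ _ hik (show i ≤ n - (r : ℕ) - 1 + 1 from by omega),
              gev5 n α ε i _ _ hik (show i ≤ (n - (r : ℕ) : ℕ) + 1 from by omega)]
            try simp only [Fin.val_mk]
            rw [show n - (r : ℕ) - 1 + 1 = n - (r : ℕ) from by omega]
            obtain ⟨m, hm⟩ : ∃ m, m = n - (r : ℕ) - (n - (c : ℕ)) := ⟨_, rfl⟩
            rw [← hm, show (n - (r : ℕ) : ℕ) + 1 - (n - (c : ℕ)) = m + 1 from by omega]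
            exact key2 m _ _ (hpi (n - (r : ℕ)) (by omega) (by omega))
              (hpi (n - (r : ℕ) + 1) (by omega) (by omega))
          · rw [gev4 n α ε i _ _ hik (show n - (r : ℕ) - 1 + 1 ≠ n - (c : ℕ) from by omega)
                (show n - (r : ℕ) - 1 + 1 < i from by omega),
              mul_zero, m1c n α ε i r _ hr rfl (by omega), zero_mul, add_zero]
end

section
/- Let n ≥ 1 be an integer and let α_1,…,α_{n+1}, β, ε be real numbers with β ≠ 0, ε ≠ 0, and β + ε ≠ 0. Suppose x : ℝ → ℝ satisfies x(0) = 0 and, for every real t, x is differentiable at t with derivative α_{n+1} · ((∏_{j=1}^n α_j)/β^n) · P(n, βt) − (β+ε) x(t), where P is the normalised lower incomplete gamma function. Then for every real t, x(t) = (α_{n+1}/(β+ε)) · ((∏_{j=1}^n α_j)/β^n) · ( 1 − e^{−βt} [ (−β/ε)^n e^{−εt} + ∑_{k=0}^{n−1} ((ε^{n−k} − (−β)^{n−k}) (βt)^k) / (ε^{n−k} k!) ] ). -/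
open Real Finset

lemma hasDerivAt_S (m : ℕ) (x : ℝ) :
    HasDerivAt (fun x : ℝ => ∑ k ∈ range (m+1), x ^ k / Nat.factorial k)
      (∑ k ∈ range m, x ^ k / Nat.factorial k) x := by
  have h : HasDerivAt (fun x : ℝ => ∑ k ∈ range (m+1), x ^ k / Nat.factorial k)
      (∑ k ∈ range (m+1), ((k : ℝ) * x ^ (k-1)) / Nat.factorial k) x := by
    apply HasDerivAt.fun_sum
    intro k _
    simpa using (hasDerivAt_pow k x).div_const (Nat.factorial k)
  convert h using 1
  rw [Finset.sum_range_succ']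
  simp only [Nat.cast_zero, zero_mul, pow_zero, Nat.factorial_zero, Nat.cast_one, zero_div,
    add_zero]
  refine Finset.sum_congr rfl fun k _ => ?_
  have hk : (Nat.factorial (k+1) : ℝ) = (k+1) * Nat.factorial k := by
    push_cast [Nat.factorial_succ]; ring
  rw [hk]
  have h1 : (Nat.factorial k : ℝ) ≠ 0 := Nat.cast_ne_zero.2 (Nat.factorial_ne_zero k)
  have h2 : ((k:ℝ)+1) ≠ 0 := by positivity
  field_simp
  rw [show k + 1 - 1 = k by omega]; push_cast
  ring

lemma normIncGamma_eq (m : ℕ) (x : ℝ) :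
    normIncGamma (m+1) x = 1 - Real.exp (-x) * ∑ k ∈ range (m+1), x ^ k / Nat.factorial k := by
  set f : ℝ → ℝ := fun x =>
    normIncGamma (m+1) x - (1 - Real.exp (-x) * ∑ k ∈ range (m+1), x ^ k / Nat.factorial k)
    with hf
  have hcont : Continuous fun s : ℝ => Real.exp (-s) * s ^ m := by continuity
  have hd : ∀ x : ℝ, HasDerivAt f 0 x := by
    intro x
    have hint : HasDerivAt (fun u : ℝ => ∫ s in (0:ℝ)..u, Real.exp (-s) * s ^ m)
        (Real.exp (-x) * x ^ m) x :=
      intervalIntegral.integral_hasDerivAt_right (hcont.intervalIntegrable _ _)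
        (hcont.aestronglyMeasurable.stronglyMeasurableAtFilter) hcont.continuousAt
    have h1 : HasDerivAt (fun u : ℝ => normIncGamma (m+1) u)
        (Real.exp (-x) * x ^ m / Nat.factorial m) x := by
      have := hint.div_const (Nat.factorial m)
      simpa [normIncGamma] using this
    have hexp : HasDerivAt (fun u : ℝ => Real.exp (-u)) (-Real.exp (-x)) x := by
      simpa using ((hasDerivAt_id x).neg).exp
    have h2 : HasDerivAt (fun u : ℝ => Real.exp (-u) * ∑ k ∈ range (m+1), u ^ k / Nat.factorial k)
        (-Real.exp (-x) * (∑ k ∈ range (m+1), x ^ k / Nat.factorial k)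
          + Real.exp (-x) * ∑ k ∈ range m, x ^ k / Nat.factorial k) x :=
      hexp.mul (hasDerivAt_S m x)
    have h3 := h1.sub ((hasDerivAt_const x (1:ℝ)).sub h2)
    refine h3.congr_deriv ?_
    have hs : (∑ k ∈ range (m+1), x ^ k / Nat.factorial k)
        = (∑ k ∈ range m, x ^ k / Nat.factorial k) + x ^ m / Nat.factorial m :=
      Finset.sum_range_succ _ _
    rw [hs]
    ring
  have hconst : f x = f 0 :=
    is_const_of_deriv_eq_zero (fun y => (hd y).differentiableAt) (fun y => (hd y).deriv) x 0
  have hf0 : f 0 = 0 := by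
    simp [hf, normIncGamma, Finset.sum_range_succ']
  have := hconst.trans hf0
  have : normIncGamma (m+1) x
      - (1 - Real.exp (-x) * ∑ k ∈ range (m+1), x ^ k / Nat.factorial k) = 0 := this
  linarith

lemma key (m : ℕ) (β ε : ℝ) (hβ : β ≠ 0) (hε : ε ≠ 0) (u : ℝ) :
    (∑ k ∈ range (m+1),
        (ε ^ (m+1-k) - (-β) ^ (m+1-k)) * ((k : ℝ) * u ^ (k-1) * β) / (ε ^ (m+1-k) * Nat.factorial k))
      + ε * ∑ k ∈ range (m+1),
        (ε ^ (m+1-k) - (-β) ^ (m+1-k)) * u ^ k / (ε ^ (m+1-k) * Nat.factorial k)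
    = (β + ε) * ∑ k ∈ range (m+1), u ^ k / Nat.factorial k := by
  have hfac : ∀ k : ℕ, (Nat.factorial k : ℝ) ≠ 0 :=
    fun k => Nat.cast_ne_zero.2 (Nat.factorial_ne_zero k)
  have e1 : (∑ k ∈ range (m+1),
      (ε ^ (m+1-k) - (-β) ^ (m+1-k)) * ((k : ℝ) * u ^ (k-1) * β) / (ε ^ (m+1-k) * Nat.factorial k))
      = ∑ j ∈ range m,
      (ε ^ (m-j) - (-β) ^ (m-j)) * (((j:ℝ)+1) * u ^ j * β) / (ε ^ (m-j) * Nat.factorial (j+1)) := by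
    rw [Finset.sum_range_succ']
    simp only [Nat.cast_zero, zero_mul, mul_zero, zero_div, add_zero, zero_mul]
    refine Finset.sum_congr rfl fun j _ => ?_
    have h1 : m + 1 - (j+1) = m - j := by omega
    rw [h1]
    push_cast
    ring_nf
  rw [e1, Finset.mul_sum, Finset.sum_range_succ, Finset.mul_sum, Finset.sum_range_succ,
    ← add_assoc, ← Finset.sum_add_distrib]
  have hb : ε * ((ε ^ (m+1-m) - (-β) ^ (m+1-m)) * u ^ m / (ε ^ (m+1-m) * Nat.factorial m))
      = (β + ε) * (u ^ m / Nat.factorial m) := by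
    have h1 : m + 1 - m = 1 := by omega
    rw [h1]
    field_simp
    ring
  rw [hb]
  congr 1
  refine Finset.sum_congr rfl fun j hj => ?_
  have hjm : j < m := Finset.mem_range.mp hj
  obtain ⟨d, hd⟩ : ∃ d, m = j + 1 + d := ⟨m - (j+1), by omega⟩
  have h1 : m - j = d + 1 := by omega
  have h2 : m + 1 - j = d + 2 := by omega
  rw [h1, h2]
  have hfacj : (Nat.factorial (j+1) : ℝ) = ((j:ℝ)+1) * Nat.factorial j := by
    push_cast [Nat.factorial_succ]; ring
  rw [hfacj]
  have h3 : ((j:ℝ)+1) ≠ 0 := by positivity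
  field_simp
  ring

/-- solution for the ε-perturbed output protein of a reordered cascade under
constant stimulus. -/
theorem perturbed_output_constant_stimulus
    (n : ℕ) (hn : 1 ≤ n) (α : ℕ → ℝ) (β ε : ℝ)
    (hβ : β ≠ 0) (hε : ε ≠ 0) (hβε : β + ε ≠ 0)
    (x : ℝ → ℝ) (h0 : x 0 = 0)
    (hx : ∀ t : ℝ, HasDerivAt x
      (α (n + 1) * ((∏ j ∈ Finset.Icc 1 n, α j) / β ^ n) * normIncGamma n (β * t)
        - (β + ε) * x t) t) :
    ∀ t : ℝ, x t = (α (n + 1) / (β + ε)) * ((∏ j ∈ Finset.Icc 1 n, α j) / β ^ n) *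
      (1 - Real.exp (-β * t) * ((-β / ε) ^ n * Real.exp (-ε * t)
        + ∑ k ∈ Finset.range n,
            (ε ^ (n - k) - (-β) ^ (n - k)) * (β * t) ^ k / (ε ^ (n - k) * Nat.factorial k))) := by
  obtain ⟨m, rfl⟩ : ∃ m, n = m + 1 := ⟨n - 1, by omega⟩
  set Q : ℝ := (∏ j ∈ Finset.Icc 1 (m+1), α j) / β ^ (m+1) with hQ
  set A : ℝ := α (m + 1 + 1) / (β + ε) * Q with hA
  set G : ℝ → ℝ := fun t => (-β / ε) ^ (m+1) * Real.exp (-ε * t)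
        + ∑ k ∈ Finset.range (m+1),
            (ε ^ (m+1 - k) - (-β) ^ (m+1 - k)) * (β * t) ^ k / (ε ^ (m+1 - k) * Nat.factorial k)
    with hG
  set y : ℝ → ℝ := fun t => A * (1 - Real.exp (-β * t) * G t) with hy
  -- derivative of G
  have hG' : ∀ t : ℝ, HasDerivAt G
      ((-β / ε) ^ (m+1) * (Real.exp (-ε * t) * (-ε))
        + ∑ k ∈ Finset.range (m+1),
            (ε ^ (m+1 - k) - (-β) ^ (m+1 - k)) * ((k:ℝ) * (β * t) ^ (k-1) * β)
              / (ε ^ (m+1 - k) * Nat.factorial k)) t := by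
    intro t
    have hE : HasDerivAt (fun t : ℝ => Real.exp (-ε * t)) (Real.exp (-ε * t) * (-ε)) t := by
      have h : HasDerivAt (fun t : ℝ => -ε * t) (-ε) t := by
        simpa using (hasDerivAt_id t).const_mul (-ε)
      simpa [mul_comm] using h.exp
    refine HasDerivAt.add (hE.const_mul _) (HasDerivAt.fun_sum fun k _ => ?_)
    have hp : HasDerivAt (fun t : ℝ => (β * t) ^ k) ((k:ℝ) * (β * t) ^ (k-1) * β) t := by
      have h1 : HasDerivAt (fun t : ℝ => β * t) β t := by
        simpa using (hasDerivAt_id t).const_mul β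
      exact (hasDerivAt_pow k (β * t)).comp t h1
    simpa [mul_div_assoc] using (hp.const_mul (ε ^ (m+1 - k) - (-β) ^ (m+1 - k))).div_const
      (ε ^ (m+1 - k) * Nat.factorial k)
  -- y satisfies the ODE
  have hyODE : ∀ t : ℝ, HasDerivAt y
      (α (m + 1 + 1) * Q * normIncGamma (m+1) (β * t) - (β + ε) * y t) t := by
    intro t
    have hEb : HasDerivAt (fun t : ℝ => Real.exp (-β * t)) (Real.exp (-β * t) * (-β)) t := by
      have h : HasDerivAt (fun t : ℝ => -β * t) (-β) t := by
        simpa using (hasDerivAt_id t).const_mul (-β)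
      simpa [mul_comm] using h.exp
    have hd : HasDerivAt y
        (A * (0 - (Real.exp (-β * t) * (-β) * G t + Real.exp (-β * t) *
          ((-β / ε) ^ (m+1) * (Real.exp (-ε * t) * (-ε))
            + ∑ k ∈ Finset.range (m+1),
                (ε ^ (m+1 - k) - (-β) ^ (m+1 - k)) * ((k:ℝ) * (β * t) ^ (k-1) * β)
                  / (ε ^ (m+1 - k) * Nat.factorial k))))) t :=
      (((hasDerivAt_const t (1:ℝ)).sub (hEb.mul (hG' t))).const_mul A)
    convert hd using 1
    rw [normIncGamma_eq m (β * t), show (-(β * t)) = -β * t from (neg_mul β t).symm]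
    have hCA : α (m + 1 + 1) * Q = (β + ε) * A := by
      rw [hA]; field_simp
    rw [hCA, hy]
    have hkey := key m β ε hβ hε (β * t)
    set S1 : ℝ := ∑ k ∈ Finset.range (m+1),
        (ε ^ (m+1 - k) - (-β) ^ (m+1 - k)) * ((k:ℝ) * (β * t) ^ (k-1) * β)
          / (ε ^ (m+1 - k) * Nat.factorial k) with hS1
    set S2 : ℝ := ∑ k ∈ Finset.range (m+1), (β * t) ^ k / Nat.factorial k with hS2
    have hGexp : G t = (-β / ε) ^ (m+1) * Real.exp (-ε * t)
        + ∑ k ∈ Finset.range (m+1),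
            (ε ^ (m+1 - k) - (-β) ^ (m+1 - k)) * (β * t) ^ k
              / (ε ^ (m+1 - k) * Nat.factorial k) := rfl
    -- goal: (β+ε)A(1 - E S2) - (β+ε)A(1 - E G) = A(0 - (E(-β)G + E(S1 + c E2 (-ε))))
    -- key: S1 + ε * Σ = (β+ε) S2, and G t = c E2 + Σ.
    linear_combination (A * Real.exp (-β * t)) * hkey
      - ((β + ε) * A * Real.exp (-β * t) - A * Real.exp (-β * t) * ε) * hGexp
  -- uniqueness
  have huniq : ∀ t : ℝ, x t = y t := by
    have hz : ∀ t : ℝ, HasDerivAt (fun t => (x t - y t) * Real.exp ((β + ε) * t)) 0 t := by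
      intro t
      have hE : HasDerivAt (fun t : ℝ => Real.exp ((β + ε) * t))
          (Real.exp ((β + ε) * t) * (β + ε)) t := by
        have h : HasDerivAt (fun t : ℝ => (β + ε) * t) (β + ε) t := by
          simpa using (hasDerivAt_id t).const_mul (β + ε)
        simpa [mul_comm] using h.exp
      have := ((hx t).sub (hyODE t)).mul hE
      refine this.congr_deriv ?_
      rw [Pi.sub_apply]
      ring
    intro t
    have hc : (x t - y t) * Real.exp ((β + ε) * t)
        = (x 0 - y 0) * Real.exp ((β + ε) * 0) :=
      is_const_of_deriv_eq_zero (fun s => (hz s).differentiableAt)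
        (fun s => (hz s).deriv) t 0
    have hy0 : y 0 = 0 := by
      simp only [hy, hG]
      rw [Finset.sum_range_succ']
      have hp : (-β / ε) ^ (m+1) = (-β) ^ (m+1) / ε ^ (m+1) := div_pow _ _ _
      simp [hp]
      right
      field_simp
      ring
    rw [h0, hy0] at hc
    have hc' : x t - y t = 0 := by simpa using hc
    linarith
  intro t
  exact huniq t
end
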